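/- arXiv:1601.02601 — 5 statements merged into one kernel-verified Lean document; each statement's English description precedes it below -/
import Mathlib

section
/- Let Q = Q(r,m,0) with m ≥ 3 and r ≥ 0. Then χ'_s(Q) = n_1(Q) = r + m. -/
open SimpleGraph

variable {V : Type*}

/-- A vertex distinguishing proper edge `k`-coloring (vdec): a proper edge coloring
(edges sharing an endpoint get different colors) such that distinct vertices have
distinct sets of colors on their incident edges. -/
def IsVDEC (G : SimpleGraph V) (k : ℕ) (c : Sym2 V → Fin k) : Prop :=
  (∀ ⦃u v w : V⦄, G.Adj u v → G.Adj u w → v ≠ w → c s(u, v) ≠ c s(u, w)) ∧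
  (∀ u v : V, u ≠ v →
    {i : Fin k | ∃ w, G.Adj u w ∧ c s(u, w) = i} ≠
    {i : Fin k | ∃ w, G.Adj v w ∧ c s(v, w) = i})

/-- `χ'ₛ(G)`: the minimum number of colors in a vdec of `G`. -/
noncomputable def vdecNum (G : SimpleGraph V) : ℕ :=
  sInf {k : ℕ | ∃ c : Sym2 V → Fin k, IsVDEC G k c}

/-- `n_d(G)`: the number of vertices of degree `d` in `G`. -/
noncomputable def numDeg (G : SimpleGraph V) (d : ℕ) : ℕ :=
  Nat.card {v : V // Nat.card (G.neighborSet v) = d}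

/-- Vertex type of the tree `Q(r,m,n)`: the center `w₀`, the leaves `w₁,…,w_r`,
the pairs `sᵢ, s'ᵢ` (encoded as `(i,0)` and `(i,1)`), the vertices `t₁,…,tₙ`,
and the leaves `t'_{i,j}` for `j < rv i`. -/
abbrev QVert (r m n : ℕ) (rv : Fin n → ℕ) : Type :=
  Unit ⊕ Fin r ⊕ (Fin m × Fin 2) ⊕ (Fin n ⊕ Σ i : Fin n, Fin (rv i))

/-- The tree `Q(r,m,n)` of diameter four: the center `w₀` is adjacent to the `r` leaves
`wᵢ`, to the `m` vertices `sᵢ` (each `sᵢ` having one further leaf neighbor `s'ᵢ`),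
and to the `n` vertices `tᵢ`, where `tᵢ` has `rv i` further neighbors, all leaves. -/
def QGraph (r m n : ℕ) (rv : Fin n → ℕ) : SimpleGraph (QVert r m n rv) :=
  SimpleGraph.fromRel (fun a b =>
    (a = Sum.inl () ∧
      ((∃ i, b = Sum.inr (Sum.inl i)) ∨
       (∃ i, b = Sum.inr (Sum.inr (Sum.inl (i, (0 : Fin 2))))) ∨
       (∃ i, b = Sum.inr (Sum.inr (Sum.inr (Sum.inl i)))))) ∨
    (∃ i : Fin m, a = Sum.inr (Sum.inr (Sum.inl (i, (0 : Fin 2)))) ∧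
       b = Sum.inr (Sum.inr (Sum.inl (i, (1 : Fin 2))))) ∨
    (∃ (i : Fin n) (j : Fin (rv i)), a = Sum.inr (Sum.inr (Sum.inr (Sum.inl i))) ∧
       b = Sum.inr (Sum.inr (Sum.inr (Sum.inr ⟨i, j⟩)))))

namespace VDECProofAux

variable {r m : ℕ}

abbrev QV (r m : ℕ) := QVert r m 0 Fin.elim0

def w0 : QV r m := Sum.inl ()
def wv (i : Fin r) : QV r m := Sum.inr (Sum.inl i)
def sv (i : Fin m) : QV r m := Sum.inr (Sum.inr (Sum.inl (i, 0)))
def sv' (i : Fin m) : QV r m := Sum.inr (Sum.inr (Sum.inl (i, 1)))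

lemma vcases (v : QV r m) :
    v = w0 ∨ (∃ i, v = wv i) ∨ (∃ i, v = sv i) ∨ (∃ i, v = sv' i) := by
  rcases v with _ | i | ⟨i, j⟩ | x | x
  · left; rfl
  · right; left; exact ⟨i, rfl⟩
  · fin_cases j
    · right; right; left; exact ⟨i, rfl⟩
    · right; right; right; exact ⟨i, rfl⟩
  · exact x.elim0
  · exact x.1.elim0

lemma adj_iff (a b : QV r m) :
    (QGraph r m 0 Fin.elim0).Adj a b ↔
    (∃ i : Fin r, a = w0 ∧ b = wv i) ∨ (∃ i : Fin r, b = w0 ∧ a = wv i) ∨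
    (∃ i : Fin m, a = w0 ∧ b = sv i) ∨ (∃ i : Fin m, b = w0 ∧ a = sv i) ∨
    (∃ i : Fin m, a = sv i ∧ b = sv' i) ∨ (∃ i : Fin m, b = sv i ∧ a = sv' i) := by
  simp only [QGraph, SimpleGraph.fromRel_adj, w0, wv, sv, sv']
  constructor
  · rintro ⟨hne, h⟩
    rcases h with (⟨rfl, (⟨i, rfl⟩ | ⟨i, rfl⟩ | ⟨i, _⟩)⟩ | ⟨i, rfl, rfl⟩ | ⟨i, _, _, _⟩) |
      (⟨rfl, (⟨i, rfl⟩ | ⟨i, rfl⟩ | ⟨i, _⟩)⟩ | ⟨i, rfl, rfl⟩ | ⟨i, _, _, _⟩)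
    · exact Or.inl ⟨i, rfl, rfl⟩
    · exact Or.inr (Or.inr (Or.inl ⟨i, rfl, rfl⟩))
    · exact i.elim0
    · exact Or.inr (Or.inr (Or.inr (Or.inr (Or.inl ⟨i, rfl, rfl⟩))))
    · exact i.elim0
    · exact Or.inr (Or.inl ⟨i, rfl, rfl⟩)
    · exact Or.inr (Or.inr (Or.inr (Or.inl ⟨i, rfl, rfl⟩)))
    · exact i.elim0
    · exact Or.inr (Or.inr (Or.inr (Or.inr (Or.inr ⟨i, rfl, rfl⟩))))
    · exact i.elim0
  · rintro (⟨i, rfl, rfl⟩ | ⟨i, rfl, rfl⟩ | ⟨i, rfl, rfl⟩ | ⟨i, rfl, rfl⟩ | ⟨i, rfl, rfl⟩ |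
      ⟨i, rfl, rfl⟩)
    · exact ⟨by simp, Or.inl (Or.inl ⟨rfl, Or.inl ⟨i, rfl⟩⟩)⟩
    · exact ⟨by simp, Or.inr (Or.inl ⟨rfl, Or.inl ⟨i, rfl⟩⟩)⟩
    · exact ⟨by simp, Or.inl (Or.inl ⟨rfl, Or.inr (Or.inl ⟨i, rfl⟩)⟩)⟩
    · exact ⟨by simp, Or.inr (Or.inl ⟨rfl, Or.inr (Or.inl ⟨i, rfl⟩)⟩)⟩
    · exact ⟨by simp [Fin.ext_iff], Or.inl (Or.inr (Or.inl ⟨i, rfl, rfl⟩))⟩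
    · exact ⟨by simp [Fin.ext_iff], Or.inr (Or.inr (Or.inl ⟨i, rfl, rfl⟩))⟩

lemma nbhd_wv (i : Fin r) :
    (QGraph r m 0 Fin.elim0).neighborSet (wv i) = {(w0 : QV r m)} := by
  ext x
  simp only [SimpleGraph.mem_neighborSet, adj_iff, Set.mem_singleton_iff, w0, wv, sv, sv']
  aesop

lemma nbhd_sv' (i : Fin m) :
    (QGraph r m 0 Fin.elim0).neighborSet (sv' i) = {(sv i : QV r m)} := by
  ext x
  simp only [SimpleGraph.mem_neighborSet, adj_iff, Set.mem_singleton_iff, w0, wv, sv, sv']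
  aesop

lemma nbhd_sv (i : Fin m) :
    (QGraph r m 0 Fin.elim0).neighborSet (sv i) = {(w0 : QV r m), sv' i} := by
  ext x
  simp only [SimpleGraph.mem_neighborSet, adj_iff, Set.mem_insert_iff,
    Set.mem_singleton_iff, w0, wv, sv, sv']
  aesop

lemma nbhd_w0 :
    (QGraph r m 0 Fin.elim0).neighborSet w0 = Set.range (Sum.elim wv sv) := by
  ext x
  simp only [SimpleGraph.mem_neighborSet, adj_iff, Set.mem_range, w0, wv, sv, sv',
    Sum.exists, Sum.elim_inl, Sum.elim_inr]
  aesop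

lemma inj_wvsv : Function.Injective (Sum.elim wv sv : Fin r ⊕ Fin m → QV r m) := by
  rintro (i | i) (j | j) h <;> simp [wv, sv] at h <;> simp [h]

lemma inj_wvsv' : Function.Injective (Sum.elim wv sv' : Fin r ⊕ Fin m → QV r m) := by
  rintro (i | i) (j | j) h <;> simp [wv, sv'] at h <;> simp [h]

lemma card_nbhd_w0 : Nat.card ((QGraph r m 0 Fin.elim0).neighborSet w0) = r + m := by
  rw [nbhd_w0, Nat.card_range_of_injective inj_wvsv]
  simp [Nat.card_eq_fintype_card]

lemma deg_one_iff (v : QV r m) (hm : 3 ≤ m) :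
    Nat.card ((QGraph r m 0 Fin.elim0).neighborSet v) = 1 ↔
    v ∈ Set.range (Sum.elim wv sv' : Fin r ⊕ Fin m → QV r m) := by
  rcases vcases v with rfl | ⟨i, rfl⟩ | ⟨i, rfl⟩ | ⟨i, rfl⟩
  · rw [card_nbhd_w0]
    simp only [Set.mem_range]
    constructor
    · intro h; omega
    · rintro ⟨(j | j), h⟩ <;> simp [wv, sv', w0] at h
  · simp only [nbhd_wv, Set.mem_range]
    constructor
    · intro _; exact ⟨Sum.inl i, rfl⟩
    · intro _; rw [Nat.card_coe_set_eq, Set.ncard_singleton]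
  · rw [nbhd_sv, Nat.card_coe_set_eq, Set.ncard_pair (by simp [w0, sv'])]
    simp only [Set.mem_range]
    constructor
    · intro h; omega
    · rintro ⟨(j | j), h⟩ <;> simp [wv, sv', sv, Fin.ext_iff] at h
  · simp only [nbhd_sv', Set.mem_range]
    constructor
    · intro _; exact ⟨Sum.inr i, rfl⟩
    · intro _; rw [Nat.card_coe_set_eq, Set.ncard_singleton]

lemma numDeg_eq (hm : 3 ≤ m) : numDeg (QGraph r m 0 Fin.elim0) 1 = r + m := by
  have h : {v : QV r m | Nat.card ((QGraph r m 0 Fin.elim0).neighborSet v) = 1} =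
      Set.range (Sum.elim wv sv' : Fin r ⊕ Fin m → QV r m) := by
    ext v; exact deg_one_iff v hm
  have : numDeg (QGraph r m 0 Fin.elim0) 1 =
      Nat.card {v : QV r m | Nat.card ((QGraph r m 0 Fin.elim0).neighborSet v) = 1} := rfl
  rw [this, h, Nat.card_range_of_injective inj_wvsv']
  simp [Nat.card_eq_fintype_card]

/-! ### The coloring -/

def cw (i : Fin r) : Fin (r + m) := Fin.castAdd m i
def cs (i : Fin m) : Fin (r + m) := Fin.natAdd r i
def cp (hm : 0 < m) (i : Fin m) : Fin (r + m) :=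
  Fin.natAdd r ⟨(i.val + 1) % m, Nat.mod_lt _ hm⟩

def gcol (hm : 0 < m) : QV r m → Fin (r + m)
  | Sum.inr (Sum.inl i) => cw i
  | Sum.inr (Sum.inr (Sum.inl (i, j))) => if j = 0 then cs i else cp hm i
  | _ => cs ⟨0, hm⟩

def rk : QV r m → ℕ
  | Sum.inl _ => 0
  | Sum.inr (Sum.inl _) => 1
  | Sum.inr (Sum.inr (Sum.inl (_, j))) => if j = 0 then 1 else 2
  | Sum.inr (Sum.inr (Sum.inr _)) => 3

def c0 (hm : 0 < m) (a b : QV r m) : Fin (r + m) :=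
  if rk a < rk b then gcol hm b else if rk b < rk a then gcol hm a else cs ⟨0, hm⟩

lemma c0_symm (hm : 0 < m) (a b : QV r m) : c0 hm a b = c0 hm b a := by
  unfold c0
  split_ifs <;> first | rfl | omega

def cc (hm : 0 < m) : Sym2 (QV r m) → Fin (r + m) :=
  Sym2.lift ⟨fun a b => c0 hm a b, fun a b => c0_symm hm a b⟩

@[simp] lemma cc_mk (hm : 0 < m) (a b : QV r m) : cc hm s(a, b) = c0 hm a b := rfl

lemma cc_w0_wv (hm : 0 < m) (i : Fin r) : cc hm s(w0, wv i) = cw i := by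
  simp [cc_mk, c0, rk, gcol, w0, wv]

lemma cc_w0_sv (hm : 0 < m) (i : Fin m) : cc (r := r) hm s(w0, sv i) = cs i := by
  simp [cc_mk, c0, rk, gcol, w0, sv]

lemma cc_sv_sv' (hm : 0 < m) (i : Fin m) : cc (r := r) hm s(sv i, sv' i) = cp hm i := by
  simp [cc_mk, c0, rk, gcol, sv, sv']

/-! ### Color arithmetic -/

lemma mod_succ {i : ℕ} (h : i < m) : (i + 1) % m = if i + 1 = m then 0 else i + 1 := by
  split_ifs with h'
  · simp [h']
  · exact Nat.mod_eq_of_lt (by omega)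

lemma cw_val (i : Fin r) : (cw (m := m) i).val = i.val := rfl
lemma cs_val (i : Fin m) : (cs (r := r) i).val = r + i.val := rfl
lemma cp_val (hm : 0 < m) (i : Fin m) :
    (cp (r := r) hm i).val = r + (i.val + 1) % m := rfl

lemma cw_ne_cs (i : Fin r) (j : Fin m) : cw i ≠ cs j := by
  simp only [ne_eq, Fin.ext_iff, cw_val, cs_val]
  have := i.isLt; omega

lemma cw_ne_cp (hm : 0 < m) (i : Fin r) (j : Fin m) : cw i ≠ cp hm j := by
  simp only [ne_eq, Fin.ext_iff, cw_val, cp_val]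
  have := i.isLt; omega

lemma cs_inj {i j : Fin m} (h : cs (r := r) i = cs j) : i = j := by
  simp only [Fin.ext_iff, cs_val] at h ⊢; omega

lemma cw_inj {i j : Fin r} (h : cw (m := m) i = cw j) : i = j := by
  simp only [Fin.ext_iff, cw_val] at h ⊢; omega

lemma cp_inj (hm : 0 < m) {i j : Fin m} (h : cp (r := r) hm i = cp hm j) : i = j := by
  simp only [Fin.ext_iff, cp_val] at h ⊢
  rw [mod_succ i.isLt, mod_succ j.isLt] at h
  have hi := i.isLt; have hj := j.isLt
  split_ifs at h <;> omega

lemma cs_ne_cp (hm : 0 < m) (hm3 : 3 ≤ m) (i : Fin m) :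
    cs (r := r) i ≠ cp hm i := by
  simp only [ne_eq, Fin.ext_iff, cs_val, cp_val]
  rw [mod_succ i.isLt]
  have hi := i.isLt
  split_ifs <;> omega

lemma pair_ne_pair (hm : 0 < m) (hm3 : 3 ≤ m) {i j : Fin m} (hij : i ≠ j) :
    ({cs (r := r) i, cp hm i} : Set (Fin (r + m))) ≠ {cs j, cp hm j} := by
  intro h
  rw [Set.pair_eq_pair_iff] at h
  rcases h with ⟨h1, _⟩ | ⟨h1, h2⟩
  · exact hij (cs_inj h1)
  · simp only [Fin.ext_iff, cs_val, cp_val] at h1 h2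
    rw [mod_succ j.isLt] at h1
    rw [mod_succ i.isLt] at h2
    have hi := i.isLt; have hj := j.isLt
    have : i.val ≠ j.val := fun hc => hij (Fin.ext hc)
    split_ifs at h1 h2 <;> omega

/-! ### Color sets -/

def CS {k : ℕ} (c : Sym2 (QV r m) → Fin k) (u : QV r m) : Set (Fin k) :=
  {x | ∃ w, (QGraph r m 0 Fin.elim0).Adj u w ∧ c s(u, w) = x}

lemma CS_eq_image {k : ℕ} (c : Sym2 (QV r m) → Fin k) (u : QV r m) :
    CS c u = (fun w => c s(u, w)) '' (QGraph r m 0 Fin.elim0).neighborSet u := rfl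

lemma CS_wv (hm : 0 < m) (i : Fin r) : CS (cc hm) (wv i) = {cw i} := by
  rw [CS_eq_image, nbhd_wv, Set.image_singleton,
    show s((wv i : QV r m), w0) = s(w0, wv i) from Sym2.eq_swap, cc_w0_wv]

lemma CS_sv' (hm : 0 < m) (i : Fin m) : CS (cc (r := r) hm) (sv' i) = {cp hm i} := by
  rw [CS_eq_image, nbhd_sv', Set.image_singleton,
    show s((sv' i : QV r m), sv i) = s(sv i, sv' i) from Sym2.eq_swap, cc_sv_sv']

lemma CS_sv (hm : 0 < m) (i : Fin m) : CS (cc (r := r) hm) (sv i) = {cs i, cp hm i} := by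
  rw [CS_eq_image, nbhd_sv, Set.image_pair,
    show s((sv i : QV r m), w0) = s(w0, sv i) from Sym2.eq_swap, cc_w0_sv, cc_sv_sv']

lemma CS_w0 (hm : 0 < m) : CS (cc hm) (w0 : QV r m) = Set.univ := by
  apply Set.eq_univ_of_forall
  intro x
  by_cases hx : x.val < r
  · refine ⟨wv ⟨x.val, hx⟩, ?_, ?_⟩
    · rw [← SimpleGraph.mem_neighborSet, nbhd_w0]; exact ⟨Sum.inl _, rfl⟩
    · rw [cc_w0_wv]; exact Fin.ext rfl
  · have hx2 : x.val - r < m := by have := x.isLt; omega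
    refine ⟨sv ⟨x.val - r, hx2⟩, ?_, ?_⟩
    · rw [← SimpleGraph.mem_neighborSet, nbhd_w0]; exact ⟨Sum.inr _, rfl⟩
    · rw [cc_w0_sv]; exact Fin.ext (by simp only [cs_val]; omega)

/-! ### Set inequality helpers -/

lemma univ_ne_singleton (hm3 : 3 ≤ m) (a : Fin (r + m)) :
    (Set.univ : Set (Fin (r + m))) ≠ {a} := by
  intro h
  have h1 : (Set.univ : Set (Fin (r + m))).ncard = r + m := by
    rw [Set.ncard_univ, Nat.card_eq_fintype_card, Fintype.card_fin]
  rw [h, Set.ncard_singleton] at h1; omega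

lemma univ_ne_pair (hm3 : 3 ≤ m) (a b : Fin (r + m)) :
    (Set.univ : Set (Fin (r + m))) ≠ {a, b} := by
  intro h
  have h1 : (Set.univ : Set (Fin (r + m))).ncard = r + m := by
    rw [Set.ncard_univ, Nat.card_eq_fintype_card, Fintype.card_fin]
  have h2 : ({a, b} : Set (Fin (r + m))).ncard ≤ 2 := by
    refine le_trans (Set.ncard_insert_le _ _) ?_
    rw [Set.ncard_singleton]
  rw [h] at h1; omega

lemma singleton_ne_pair {x a b : Fin (r + m)} (hab : a ≠ b) :
    ({x} : Set (Fin (r + m))) ≠ {a, b} := by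
  intro h
  have ha : a ∈ ({x} : Set (Fin (r + m))) := h ▸ Set.mem_insert _ _
  have hb : b ∈ ({x} : Set (Fin (r + m))) := h ▸ Set.mem_insert_of_mem _ rfl
  rw [Set.mem_singleton_iff] at ha hb
  exact hab (ha.trans hb.symm)

lemma singleton_ne_singleton {x y : Fin (r + m)} (h : x ≠ y) :
    ({x} : Set (Fin (r + m))) ≠ {y} := by
  simpa [Set.singleton_eq_singleton_iff] using h

/-! ### The coloring is a vdec -/

lemma isVDEC_cc (hm : 0 < m) (hm3 : 3 ≤ m) :
    IsVDEC (QGraph r m 0 Fin.elim0) (r + m) (cc hm) := by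
  constructor
  · intro u v w huv huw hvw
    rcases vcases u with rfl | ⟨i, rfl⟩ | ⟨i, rfl⟩ | ⟨i, rfl⟩
    · have hv : v ∈ Set.range (Sum.elim wv sv) := by rw [← nbhd_w0]; exact huv
      have hw' : w ∈ Set.range (Sum.elim wv sv) := by rw [← nbhd_w0]; exact huw
      obtain ⟨x, rfl⟩ := hv
      obtain ⟨y, rfl⟩ := hw'
      have hxy : x ≠ y := fun h => hvw (by rw [h])
      rcases x with i | i <;> rcases y with j | j <;>
        simp only [Sum.elim_inl, Sum.elim_inr, cc_w0_wv, cc_w0_sv]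
      · exact fun h => hxy (by rw [cw_inj h])
      · exact cw_ne_cs i j
      · exact (cw_ne_cs j i).symm
      · exact fun h => hxy (by rw [cs_inj h])
    · have hv : v ∈ ({(w0 : QV r m)} : Set _) := by rw [← nbhd_wv]; exact huv
      have hw' : w ∈ ({(w0 : QV r m)} : Set _) := by rw [← nbhd_wv i]; exact huw
      rw [Set.mem_singleton_iff] at hv hw'
      exact absurd (hv.trans hw'.symm) hvw
    · have hv : v ∈ ({(w0 : QV r m), sv' i} : Set _) := by rw [← nbhd_sv]; exact huv
      have hw' : w ∈ ({(w0 : QV r m), sv' i} : Set _) := by rw [← nbhd_sv i]; exact huw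
      rcases hv with rfl | hv <;> rcases hw' with rfl | hw'
      · exact absurd rfl hvw
      · rw [Set.mem_singleton_iff] at hw'; subst hw'
        rw [show s((sv i : QV r m), w0) = s(w0, sv i) from Sym2.eq_swap, cc_w0_sv, cc_sv_sv']
        exact cs_ne_cp hm hm3 i
      · rw [Set.mem_singleton_iff] at hv; subst hv
        rw [show s((sv i : QV r m), w0) = s(w0, sv i) from Sym2.eq_swap, cc_w0_sv, cc_sv_sv']
        exact (cs_ne_cp hm hm3 i).symm
      · rw [Set.mem_singleton_iff] at hv hw'
        exact absurd (hv.trans hw'.symm) hvw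
    · have hv : v ∈ ({(sv i : QV r m)} : Set _) := by rw [← nbhd_sv']; exact huv
      have hw' : w ∈ ({(sv i : QV r m)} : Set _) := by rw [← nbhd_sv' i]; exact huw
      rw [Set.mem_singleton_iff] at hv hw'
      exact absurd (hv.trans hw'.symm) hvw
  · intro u v huv
    change CS (cc hm) u ≠ CS (cc hm) v
    rcases vcases u with rfl | ⟨i, rfl⟩ | ⟨i, rfl⟩ | ⟨i, rfl⟩ <;>
      rcases vcases v with rfl | ⟨j, rfl⟩ | ⟨j, rfl⟩ | ⟨j, rfl⟩
    · exact absurd rfl huv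
    · rw [CS_w0, CS_wv]; exact univ_ne_singleton hm3 _
    · rw [CS_w0, CS_sv]; exact univ_ne_pair hm3 _ _
    · rw [CS_w0, CS_sv']; exact univ_ne_singleton hm3 _
    · rw [CS_w0, CS_wv]; exact (univ_ne_singleton hm3 _).symm
    · rw [CS_wv, CS_wv]
      have hij : i ≠ j := fun h => huv (by rw [h])
      exact singleton_ne_singleton fun h => hij (cw_inj h)
    · rw [CS_wv, CS_sv]; exact singleton_ne_pair (cs_ne_cp hm hm3 j)
    · rw [CS_wv, CS_sv']; exact singleton_ne_singleton (cw_ne_cp hm i j)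
    · rw [CS_w0, CS_sv]; exact (univ_ne_pair hm3 _ _).symm
    · rw [CS_wv, CS_sv]; exact (singleton_ne_pair (cs_ne_cp hm hm3 i)).symm
    · rw [CS_sv, CS_sv]
      have hij : i ≠ j := fun h => huv (by rw [h])
      exact pair_ne_pair hm hm3 hij
    · rw [CS_sv, CS_sv']; exact (singleton_ne_pair (cs_ne_cp hm hm3 i)).symm
    · rw [CS_w0, CS_sv']; exact (univ_ne_singleton hm3 _).symm
    · rw [CS_wv, CS_sv']; exact (singleton_ne_singleton (cw_ne_cp hm j i)).symm
    · rw [CS_sv, CS_sv']; exact singleton_ne_pair (cs_ne_cp hm hm3 j)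
    · rw [CS_sv', CS_sv']
      have hij : i ≠ j := fun h => huv (by rw [h])
      exact singleton_ne_singleton fun h => hij (cp_inj hm h)

/-! ### Lower bound -/

lemma lb {k : ℕ} (c : Sym2 (QV r m) → Fin k)
    (h : IsVDEC (QGraph r m 0 Fin.elim0) k c) : r + m ≤ k := by
  classical
  let f : Fin r ⊕ Fin m → QV r m := Sum.elim wv sv'
  let nb : Fin r ⊕ Fin m → QV r m := Sum.elim (fun _ => (w0 : QV r m)) sv
  have hnbhd : ∀ x, (QGraph r m 0 Fin.elim0).neighborSet (f x) = {nb x} := by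
    rintro (i | i)
    · exact nbhd_wv i
    · exact nbhd_sv' i
  have hCS : ∀ x, CS c (f x) = {c s(f x, nb x)} := fun x => by
    rw [CS_eq_image, hnbhd x, Set.image_singleton]
  have hinj : Function.Injective (fun x => c s(f x, nb x)) := by
    intro x y hxy
    by_contra hne
    have hfne : f x ≠ f y := fun hf => hne (inj_wvsv' hf)
    have hne2 : CS c (f x) ≠ CS c (f y) := h.2 _ _ hfne
    rw [hCS x, hCS y] at hne2
    have hxy' : c s(f x, nb x) = c s(f y, nb y) := hxy
    rw [hxy'] at hne2
    exact hne2 rfl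
  have := Fintype.card_le_of_injective _ hinj
  simpa using this

end VDECProofAux

/-- For `Q = Q(r,m,0)` with `m ≥ 3` and `r ≥ 0`,
`χ'ₛ(Q) = n₁(Q) = r + m`. -/
theorem vdecNum_QGraph_rm0 (r m : ℕ) (hm : 3 ≤ m) :
    vdecNum (QGraph r m 0 Fin.elim0) = numDeg (QGraph r m 0 Fin.elim0) 1 ∧
    numDeg (QGraph r m 0 Fin.elim0) 1 = r + m := by
  have hm0 : 0 < m := by omega
  have h2 : numDeg (QGraph r m 0 Fin.elim0) 1 = r + m := VDECProofAux.numDeg_eq hm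
  refine ⟨?_, h2⟩
  rw [h2]
  refine le_antisymm ?_ ?_
  · exact Nat.sInf_le ⟨VDECProofAux.cc hm0, VDECProofAux.isVDEC_cc hm0 hm⟩
  · refine le_csInf ⟨r + m, VDECProofAux.cc hm0, VDECProofAux.isVDEC_cc hm0 hm⟩ ?_
    rintro k ⟨c, hc⟩
    exact VDECProofAux.lb c hc
end

section
/- Let Q = Q(r,2,0) with r ≥ 1. Then χ'_s(Q) = n_1(Q) + 1 = r + 3. -/
open SimpleGraph

variable {V : Type*}

namespace VQ
variable {r : ℕ}

abbrev Vr (r : ℕ) := QVert r 2 0 Fin.elim0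
abbrev Gr (r : ℕ) := QGraph r 2 0 Fin.elim0
abbrev vO : Vr r := Sum.inl ()
abbrev vW (i : Fin r) : Vr r := Sum.inr (Sum.inl i)
abbrev vS (i j : Fin 2) : Vr r := Sum.inr (Sum.inr (Sum.inl (i, j)))

lemma adj_iff (a b : Vr r) : (Gr r).Adj a b ↔
    ((∃ i, a = vO ∧ b = vW i) ∨ (∃ i, a = vW i ∧ b = vO) ∨
     (∃ i, a = vO ∧ b = vS i 0) ∨ (∃ i, a = vS i 0 ∧ b = vO) ∨
     (∃ i, a = vS i 0 ∧ b = vS i 1) ∨ (∃ i, a = vS i 1 ∧ b = vS i 0)) := by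
  constructor
  · rintro ⟨hne, h | h⟩
    · rcases h with ⟨ha, ⟨i, hb⟩ | ⟨i, hb⟩ | ⟨i, hb⟩⟩ | ⟨i, ha, hb⟩ | ⟨i, j, ha, hb⟩
      · exact Or.inl ⟨i, ha, hb⟩
      · exact Or.inr (Or.inr (Or.inl ⟨i, ha, hb⟩))
      · exact i.elim0
      · exact Or.inr (Or.inr (Or.inr (Or.inr (Or.inl ⟨i, ha, hb⟩))))
      · exact i.elim0
    · rcases h with ⟨hb, ⟨i, ha⟩ | ⟨i, ha⟩ | ⟨i, ha⟩⟩ | ⟨i, hb, ha⟩ | ⟨i, j, hb, ha⟩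
      · exact Or.inr (Or.inl ⟨i, ha, hb⟩)
      · exact Or.inr (Or.inr (Or.inr (Or.inl ⟨i, ha, hb⟩)))
      · exact i.elim0
      · exact Or.inr (Or.inr (Or.inr (Or.inr (Or.inr ⟨i, ha, hb⟩))))
      · exact i.elim0
  · rintro (⟨i, rfl, rfl⟩ | ⟨i, rfl, rfl⟩ | ⟨i, rfl, rfl⟩ | ⟨i, rfl, rfl⟩ | ⟨i, rfl, rfl⟩ | ⟨i, rfl, rfl⟩)
    · exact ⟨by simp, Or.inl (Or.inl ⟨rfl, Or.inl ⟨i, rfl⟩⟩)⟩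
    · exact ⟨by simp, Or.inr (Or.inl ⟨rfl, Or.inl ⟨i, rfl⟩⟩)⟩
    · exact ⟨by simp, Or.inl (Or.inl ⟨rfl, Or.inr (Or.inl ⟨i, rfl⟩)⟩)⟩
    · exact ⟨by simp, Or.inr (Or.inl ⟨rfl, Or.inr (Or.inl ⟨i, rfl⟩)⟩)⟩
    · exact ⟨by simp, Or.inl (Or.inr (Or.inl ⟨i, rfl, rfl⟩))⟩
    · exact ⟨by simp, Or.inr (Or.inr (Or.inl ⟨i, rfl, rfl⟩))⟩

end VQ

namespace VQ
variable {r : ℕ}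

def g0 (r : ℕ) : Fin r ⊕ Fin 2 → Vr r := Sum.elim (fun i => vW i) (fun i => vS i 0)

lemma g0_inj : Function.Injective (g0 r) := by
  rintro (i | i) (j | j) h <;> simp [g0] at h <;> simp [h]

lemma nbr_vO : (Gr r).neighborSet vO = Set.range (g0 r) := by
  ext x
  rw [mem_neighborSet, adj_iff]
  constructor
  · rintro (⟨i, -, rfl⟩ | ⟨i, h, -⟩ | ⟨i, -, rfl⟩ | ⟨i, h, -⟩ | ⟨i, h, -⟩ | ⟨i, h, -⟩)
    · exact ⟨Sum.inl i, rfl⟩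
    · exact absurd h (by simp)
    · exact ⟨Sum.inr i, rfl⟩
    · exact absurd h (by simp)
    · exact absurd h (by simp)
    · exact absurd h (by simp)
  · rintro ⟨i | i, rfl⟩
    · exact Or.inl ⟨i, rfl, rfl⟩
    · exact Or.inr (Or.inr (Or.inl ⟨i, rfl, rfl⟩))

lemma deg_vO : Nat.card ((Gr r).neighborSet (vO)) = r + 2 := by
  rw [nbr_vO, Nat.card_range_of_injective g0_inj, Nat.card_sum]
  simp

lemma nbr_vW (i : Fin r) : (Gr r).neighborSet (vW i) = {vO} := by
  ext x
  rw [mem_neighborSet, adj_iff, Set.mem_singleton_iff]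
  constructor
  · rintro (⟨j, h, -⟩ | ⟨j, h, rfl⟩ | ⟨j, h, -⟩ | ⟨j, h, -⟩ | ⟨j, h, -⟩ | ⟨j, h, -⟩) <;>
      first | rfl | exact absurd h (by simp)
  · rintro rfl
    exact Or.inr (Or.inl ⟨i, rfl, rfl⟩)

lemma deg_vW (i : Fin r) : Nat.card ((Gr r).neighborSet (vW i)) = 1 := by
  rw [nbr_vW, Nat.card_coe_set_eq, Set.ncard_singleton]

lemma nbr_vS1 (i : Fin 2) : (Gr r).neighborSet (vS i 1) = {vS i 0} := by
  ext x
  rw [mem_neighborSet, adj_iff, Set.mem_singleton_iff]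
  constructor
  · rintro (⟨j, h, -⟩ | ⟨j, h, -⟩ | ⟨j, h, -⟩ | ⟨j, h, -⟩ | ⟨j, h, -⟩ | ⟨j, h, rfl⟩) <;>
      simp_all
  · rintro rfl
    exact Or.inr (Or.inr (Or.inr (Or.inr (Or.inr ⟨i, rfl, rfl⟩))))

lemma deg_vS1 (i : Fin 2) : Nat.card ((Gr r).neighborSet (vS i 1)) = 1 := by
  rw [nbr_vS1, Nat.card_coe_set_eq, Set.ncard_singleton]

lemma nbr_vS0 (i : Fin 2) : (Gr r).neighborSet (vS i 0) = {vO, vS i 1} := by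
  ext x
  rw [mem_neighborSet, adj_iff, Set.mem_insert_iff, Set.mem_singleton_iff]
  constructor
  · rintro (⟨j, h, -⟩ | ⟨j, h, -⟩ | ⟨j, h, -⟩ | ⟨j, h, rfl⟩ | ⟨j, h, rfl⟩ | ⟨j, h, -⟩) <;>
      simp_all
  · rintro (rfl | rfl)
    · exact Or.inr (Or.inr (Or.inr (Or.inl ⟨i, rfl, rfl⟩)))
    · exact Or.inr (Or.inr (Or.inr (Or.inr (Or.inl ⟨i, rfl, rfl⟩))))

lemma deg_vS0 (i : Fin 2) : Nat.card ((Gr r).neighborSet (vS i 0)) = 2 := by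
  rw [nbr_vS0, Nat.card_coe_set_eq, Set.ncard_pair (by simp)]

end VQ

namespace VQ
variable {r : ℕ}

def g1 (r : ℕ) : Fin r ⊕ Fin 2 → Vr r := Sum.elim (fun i => vW i) (fun i => vS i 1)

lemma g1_inj : Function.Injective (g1 r) := by
  rintro (i | i) (j | j) h <;> simp [g1] at h <;> simp [h]

lemma degset_eq : {v : Vr r | Nat.card ((Gr r).neighborSet v) = 1} = Set.range (g1 r) := by
  ext v
  constructor
  · rintro hv
    rcases v with ⟨⟩ | v
    · have h2 := deg_vO (r := r)
      simp only [Set.mem_setOf_eq] at hv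
      rw [show (Sum.inl () : Vr r) = vO from rfl, h2] at hv
      omega
    · rcases v with i | v
      · exact ⟨Sum.inl i, rfl⟩
      · rcases v with ⟨i, j⟩ | v
        · rcases Fin.exists_fin_two.mp ⟨j, rfl⟩ with rfl | rfl
          · have h2 := deg_vS0 (r := r) i
            simp only [Set.mem_setOf_eq] at hv
            rw [show (Sum.inr (Sum.inr (Sum.inl (i, 0))) : Vr r) = vS i 0 from rfl, h2] at hv
            omega
          · exact ⟨Sum.inr i, rfl⟩
        · rcases v with i | ⟨i, _⟩ <;> exact i.elim0
  · rintro ⟨i | i, rfl⟩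
    · exact deg_vW i
    · exact deg_vS1 i

lemma numDeg_one : Nat.card {v : Vr r | Nat.card ((Gr r).neighborSet v) = 1} = r + 2 := by
  rw [degset_eq, Nat.card_range_of_injective g1_inj, Nat.card_sum]
  simp

end VQ

namespace VQ
variable {r : ℕ} {α : Type*}

lemma adj_vW_vO (i : Fin r) : (Gr r).Adj (vW i) vO :=
  (adj_iff _ _).mpr (Or.inr (Or.inl ⟨i, rfl, rfl⟩))

lemma adj_vO_vW (i : Fin r) : (Gr r).Adj vO (vW i) :=
  (adj_iff _ _).mpr (Or.inl ⟨i, rfl, rfl⟩)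

lemma adj_vO_vS0 (i : Fin 2) : (Gr r).Adj vO (vS i 0) :=
  (adj_iff _ _).mpr (Or.inr (Or.inr (Or.inl ⟨i, rfl, rfl⟩)))

lemma adj_vS0_vO (i : Fin 2) : (Gr r).Adj (vS i 0) vO :=
  (adj_iff _ _).mpr (Or.inr (Or.inr (Or.inr (Or.inl ⟨i, rfl, rfl⟩))))

lemma adj_vS0_vS1 (i : Fin 2) : (Gr r).Adj (vS i 0) (vS i 1) :=
  (adj_iff _ _).mpr (Or.inr (Or.inr (Or.inr (Or.inr (Or.inl ⟨i, rfl, rfl⟩)))))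

lemma adj_vS1_vS0 (i : Fin 2) : (Gr r).Adj (vS i 1) (vS i 0) :=
  (adj_iff _ _).mpr (Or.inr (Or.inr (Or.inr (Or.inr (Or.inr ⟨i, rfl, rfl⟩)))))

lemma CS_vW (c : Sym2 (Vr r) → α) (i : Fin r) :
    {x | ∃ w, (Gr r).Adj (vW i) w ∧ c s(vW i, w) = x} = {c s(vW i, vO)} := by
  ext x
  constructor
  · rintro ⟨w, hw, rfl⟩
    rw [← mem_neighborSet, nbr_vW, Set.mem_singleton_iff] at hw
    subst hw; rfl
  · rintro rfl
    exact ⟨vO, adj_vW_vO i, rfl⟩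

lemma CS_vS1 (c : Sym2 (Vr r) → α) (i : Fin 2) :
    {x | ∃ w, (Gr r).Adj (vS i 1) w ∧ c s(vS i 1, w) = x} = {c s(vS i 1, vS i 0)} := by
  ext x
  constructor
  · rintro ⟨w, hw, rfl⟩
    rw [← mem_neighborSet, nbr_vS1, Set.mem_singleton_iff] at hw
    subst hw; rfl
  · rintro rfl
    exact ⟨vS i 0, adj_vS1_vS0 i, rfl⟩

lemma CS_vS0 (c : Sym2 (Vr r) → α) (i : Fin 2) :
    {x | ∃ w, (Gr r).Adj (vS i 0) w ∧ c s(vS i 0, w) = x} =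
      {c s(vS i 0, vO), c s(vS i 0, vS i 1)} := by
  ext x
  constructor
  · rintro ⟨w, hw, rfl⟩
    rw [← mem_neighborSet, nbr_vS0, Set.mem_insert_iff, Set.mem_singleton_iff] at hw
    rcases hw with rfl | rfl
    · exact Or.inl rfl
    · exact Or.inr rfl
  · rintro (rfl | rfl)
    · exact ⟨vO, adj_vS0_vO i, rfl⟩
    · exact ⟨vS i 1, adj_vS0_vS1 i, rfl⟩

lemma CS_vO (c : Sym2 (Vr r) → α) :
    {x | ∃ w, (Gr r).Adj vO w ∧ c s(vO, w) = x} =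
      (fun y => c s(vO, g0 r y)) '' Set.univ := by
  ext x
  constructor
  · rintro ⟨w, hw, rfl⟩
    rw [← mem_neighborSet, nbr_vO] at hw
    obtain ⟨y, rfl⟩ := hw
    exact ⟨y, trivial, rfl⟩
  · rintro ⟨y, -, rfl⟩
    rcases y with i | i
    · exact ⟨vW i, adj_vO_vW i, rfl⟩
    · exact ⟨vS i 0, adj_vO_vS0 i, rfl⟩

end VQ

namespace VQ
variable {r : ℕ}

def F (r : ℕ) : Vr r → Vr r → ℕ
  | Sum.inl _, Sum.inr (Sum.inl i) => i
  | Sum.inl _, Sum.inr (Sum.inr (Sum.inl (i, _))) => r + i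
  | Sum.inr (Sum.inr (Sum.inl (i, j))), Sum.inr (Sum.inr (Sum.inl _)) =>
      if j = 0 then (if i = 0 then r + 2 else r) else 0
  | _, _ => 0

def cF (r : ℕ) : Sym2 (Vr r) → Fin (r + 3) :=
  Sym2.lift ⟨fun a b => ⟨(F r a b + F r b a) % (r + 3), Nat.mod_lt _ (by omega)⟩,
    fun a b => by simp [Nat.add_comm (F r a b)]⟩

lemma val_cF_vO_vW (i : Fin r) : (cF r s(vO, vW i)).val = i.val := by
  have h1 : F r vO (vW i) = i.val := rfl
  have h2 : F r (vW i) vO = 0 := rfl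
  simp only [cF, Sym2.lift_mk, h1, h2, Nat.add_zero]
  exact Nat.mod_eq_of_lt (by omega)

lemma val_cF_vO_vS (i j : Fin 2) : (cF r s(vO, vS i j)).val = r + i.val := by
  have h1 : F r vO (vS i j) = r + i.val := rfl
  have h2 : F r (vS i j) vO = 0 := rfl
  simp only [cF, Sym2.lift_mk, h1, h2, Nat.add_zero]
  exact Nat.mod_eq_of_lt (by omega)

lemma val_cF_vS (i : Fin 2) :
    (cF r s(vS i 0, vS i 1)).val = if i = 0 then r + 2 else r := by
  have h1 : F r (vS i 0) (vS i 1) = if i = 0 then r + 2 else r := rfl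
  have h2 : F r (vS i 1) (vS i 0) = 0 := by
    show (if (1 : Fin 2) = 0 then (if i = 0 then r + 2 else r) else 0) = 0
    simp
  simp only [cF, Sym2.lift_mk, h1, h2, Nat.add_zero]
  exact Nat.mod_eq_of_lt (by split <;> omega)

end VQ

namespace VQ
variable {r : ℕ}

lemma val_cF_vS0_vO (i : Fin 2) : (cF r s(vS i 0, vO)).val = r + i.val := by
  rw [Sym2.eq_swap]; exact val_cF_vO_vS i 0

lemma proper_cF :
    ∀ ⦃u v w : Vr r⦄, (Gr r).Adj u v → (Gr r).Adj u w → v ≠ w →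
      cF r s(u, v) ≠ cF r s(u, w) := by
  intro u v w h1 h2 hvw
  rw [adj_iff] at h1 h2
  rcases h1 with ⟨i, rfl, rfl⟩|⟨i, rfl, rfl⟩|⟨i, rfl, rfl⟩|⟨i, rfl, rfl⟩|⟨i, rfl, rfl⟩|⟨i, rfl, rfl⟩ <;>
    rcases h2 with ⟨j, h, rfl⟩|⟨j, h, rfl⟩|⟨j, h, rfl⟩|⟨j, h, rfl⟩|⟨j, h, rfl⟩|⟨j, h, rfl⟩ <;>
    simp only [Sum.inr.injEq, Sum.inl.injEq, Prod.mk.injEq, reduceCtorEq, false_and, and_false,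
      and_true, true_and] at h <;>
    try subst h
  all_goals try exact absurd rfl hvw
  all_goals try exact absurd h.2 (by decide)
  -- vW i vs vW j
  · intro hc
    have h2 := congrArg Fin.val hc
    rw [val_cF_vO_vW, val_cF_vO_vW] at h2
    exact hvw (congrArg vW (Fin.val_injective h2))
  -- vW i vs vS j 0
  · intro hc
    have h2 := congrArg Fin.val hc
    rw [val_cF_vO_vW, val_cF_vO_vS] at h2
    have := i.isLt
    omega
  -- vS i 0 vs vW j
  · intro hc
    have h2 := congrArg Fin.val hc
    rw [val_cF_vO_vS, val_cF_vO_vW] at h2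
    have := j.isLt
    omega
  -- vS i 0 vs vS j 0
  · intro hc
    have h2 := congrArg Fin.val hc
    rw [val_cF_vO_vS, val_cF_vO_vS] at h2
    have : i = j := Fin.val_injective (by omega)
    exact hvw (by rw [this])
  -- at vS i 0 : vO vs vS i 1
  · intro hc
    have h2 := congrArg Fin.val hc
    rw [val_cF_vS0_vO, val_cF_vS] at h2
    split_ifs at h2 with hi
    · subst hi; rw [Fin.val_zero] at h2; omega
    · exact hi (Fin.val_injective (by rw [Fin.val_zero]; omega))
  -- at vS i 0 : vS i 1 vs vO
  · intro hc
    have h2 := congrArg Fin.val hc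
    rw [val_cF_vS, val_cF_vS0_vO] at h2
    split_ifs at h2 with hi
    · subst hi; rw [Fin.val_zero] at h2; omega
    · exact hi (Fin.val_injective (by rw [Fin.val_zero]; omega))

end VQ

namespace VQ
variable {r : ℕ}

lemma val_cF_vW_vO (i : Fin r) : (cF r s(vW i, vO)).val = i.val := by
  rw [Sym2.eq_swap]; exact val_cF_vO_vW i

lemma val_cF_vS1_vS0 (i : Fin 2) :
    (cF r s(vS i 1, vS i 0)).val = if i = 0 then r + 2 else r := by
  rw [Sym2.eq_swap]; exact val_cF_vS i

lemma CS_vO_cF :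
    {x | ∃ w, (Gr r).Adj vO w ∧ cF r s(vO, w) = x} = {x : Fin (r + 3) | x.val < r + 2} := by
  rw [CS_vO]
  ext x
  constructor
  · rintro ⟨i | i, -, rfl⟩
    · have h := val_cF_vO_vW (r := r) i
      have := i.isLt
      simp only [g0, Sum.elim_inl, Set.mem_setOf_eq, h]
      omega
    · have h := val_cF_vO_vS (r := r) i 0
      have := i.isLt
      simp only [g0, Sum.elim_inr, Set.mem_setOf_eq, h]
      omega
  · intro hx
    simp only [Set.mem_setOf_eq] at hx
    rcases lt_or_ge x.val r with h | h
    · exact ⟨Sum.inl ⟨x.val, h⟩, trivial, Fin.val_injective (val_cF_vO_vW _)⟩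
    · rcases Nat.eq_or_lt_of_le h with h2 | h2
      · refine ⟨Sum.inr 0, trivial, Fin.val_injective ?_⟩
        show (cF r s(vO, vS 0 0)).val = x.val
        rw [val_cF_vO_vS, Fin.val_zero]
        omega
      · refine ⟨Sum.inr 1, trivial, Fin.val_injective ?_⟩
        show (cF r s(vO, vS 1 0)).val = x.val
        rw [val_cF_vO_vS, Fin.val_one]
        omega

lemma hA {k : ℕ} {a b : Fin k} (h : a.val ≠ b.val) : ({a} : Set (Fin k)) ≠ {b} :=
  fun hs => h (congrArg Fin.val (Set.singleton_eq_singleton_iff.mp hs))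

lemma hC {k : ℕ} {S : Set (Fin k)} {a x y : Fin k} (hx : x ∈ S) (hy : y ∈ S) (hxy : x ≠ y) :
    S ≠ {a} := by
  intro h
  rw [h, Set.mem_singleton_iff] at hx hy
  exact hxy (hx.trans hy.symm)

lemma hD {k : ℕ} {S T : Set (Fin k)} (x : Fin k) (hx : x ∈ S) (hx' : x ∉ T) : S ≠ T :=
  fun h => hx' (h ▸ hx)

end VQ

namespace VQ
variable {r : ℕ}

def CSet (r : ℕ) (u : Vr r) : Set (Fin (r + 3)) :=
  {x | ∃ w, (Gr r).Adj u w ∧ cF r s(u, w) = x}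

lemma d_OW (i : Fin r) : CSet r vO ≠ CSet r (vW i) := by
  unfold CSet
  rw [CS_vO_cF, CS_vW]
  exact hC (x := ⟨0, by omega⟩) (y := ⟨1, by omega⟩) (by simp) (by simp) (by simp [Fin.ext_iff])

lemma d_OS1 (i : Fin 2) : CSet r vO ≠ CSet r (vS i 1) := by
  unfold CSet
  rw [CS_vO_cF, CS_vS1]
  exact hC (x := ⟨0, by omega⟩) (y := ⟨1, by omega⟩) (by simp) (by simp) (by simp [Fin.ext_iff])

lemma d_OS0 (hr : 1 ≤ r) (i : Fin 2) : CSet r vO ≠ CSet r (vS i 0) := by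
  unfold CSet
  rw [CS_vO_cF, CS_vS0]
  refine hD ⟨0, by omega⟩ (by simp) ?_
  intro hm
  rcases Set.mem_insert_iff.mp hm with h | h
  · have h2 := congrArg Fin.val h
    rw [val_cF_vS0_vO] at h2
    simp only at h2
    omega
  · rw [Set.mem_singleton_iff] at h
    have h2 := congrArg Fin.val h
    rw [val_cF_vS] at h2
    simp only at h2
    split_ifs at h2 <;> omega

lemma pair_elts_ne (i : Fin 2) :
    cF r s(vS i 0, vO) ≠ cF r s(vS i 0, vS i 1) := by
  intro h
  have h2 := congrArg Fin.val h
  rw [val_cF_vS0_vO, val_cF_vS] at h2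
  split_ifs at h2 with h3
  · subst h3; rw [Fin.val_zero] at h2; omega
  · exact h3 (Fin.val_injective (by rw [Fin.val_zero]; omega))

lemma d_S0_sing (i : Fin 2) (a : Fin (r + 3)) :
    CSet r (vS i 0) ≠ {a} := by
  unfold CSet
  rw [CS_vS0]
  exact hC (Set.mem_insert _ _) (Set.mem_insert_of_mem _ rfl) (pair_elts_ne i)

lemma d_WW {i j : Fin r} (hij : i ≠ j) : CSet r (vW i) ≠ CSet r (vW j) := by
  unfold CSet
  rw [CS_vW, CS_vW]
  refine hA ?_
  rw [val_cF_vW_vO, val_cF_vW_vO]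
  exact fun h => hij (Fin.val_injective h)

lemma d_WS1 (i : Fin r) (j : Fin 2) : CSet r (vW i) ≠ CSet r (vS j 1) := by
  unfold CSet
  rw [CS_vW, CS_vS1]
  refine hA ?_
  rw [val_cF_vW_vO, val_cF_vS1_vS0]
  have := i.isLt
  split_ifs <;> omega

lemma d_S1S1 {i j : Fin 2} (hij : i ≠ j) : CSet r (vS i 1) ≠ CSet r (vS j 1) := by
  unfold CSet
  rw [CS_vS1, CS_vS1]
  refine hA ?_
  rw [val_cF_vS1_vS0, val_cF_vS1_vS0]
  split_ifs with h1 h2 h2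
  · exact absurd (h1.trans h2.symm) hij
  · omega
  · omega
  · rcases Fin.exists_fin_two.mp ⟨i, rfl⟩ with rfl | rfl
    · exact absurd rfl h1
    · rcases Fin.exists_fin_two.mp ⟨j, rfl⟩ with rfl | rfl
      · exact absurd rfl h2
      · exact absurd rfl hij

lemma d_S0S0 {i j : Fin 2} (hij : i ≠ j) : CSet r (vS i 0) ≠ CSet r (vS j 0) := by
  unfold CSet
  rw [CS_vS0, CS_vS0]
  rcases Fin.exists_fin_two.mp ⟨i, rfl⟩ with rfl | rfl <;>
    rcases Fin.exists_fin_two.mp ⟨j, rfl⟩ with rfl | rfl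
  · exact absurd rfl hij
  · refine hD (cF r s(vS 0 0, vS 0 1)) (Set.mem_insert_of_mem _ rfl) ?_
    intro hm
    rcases Set.mem_insert_iff.mp hm with h | h
    · have h2 := congrArg Fin.val h
      rw [val_cF_vS, val_cF_vS0_vO] at h2
      simp at h2
      try omega
    · rw [Set.mem_singleton_iff] at h
      have h2 := congrArg Fin.val h
      rw [val_cF_vS, val_cF_vS] at h2
      simp at h2
      try omega
  · refine hD (cF r s(vS 1 0, vO)) (Set.mem_insert _ _) ?_
    intro hm
    rcases Set.mem_insert_iff.mp hm with h | h
    · have h2 := congrArg Fin.val h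
      rw [val_cF_vS0_vO, val_cF_vS0_vO] at h2
      simp at h2
      try omega
    · rw [Set.mem_singleton_iff] at h
      have h2 := congrArg Fin.val h
      rw [val_cF_vS0_vO, val_cF_vS] at h2
      simp at h2
      try omega
  · exact absurd rfl hij

end VQ

namespace VQ
variable {r : ℕ}

lemma lower (hr : 1 ≤ r) {k : ℕ} (c : Sym2 (Vr r) → Fin k)
    (hc : IsVDEC (Gr r) k c) : r + 3 ≤ k := by
  obtain ⟨hproper, hdist⟩ := hc
  set φ : Fin r ⊕ Fin 2 → Fin k :=
    Sum.elim (fun i => c s(vW i, vO)) (fun i => c s(vS i 1, vS i 0)) with hφdef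
  set ψ : Fin r ⊕ Fin 2 → Fin k := fun y => c s(vO, g0 r y) with hψdef
  have hCS : ∀ x, {q : Fin k | ∃ w, (Gr r).Adj (g1 r x) w ∧ c s(g1 r x, w) = q} = {φ x} := by
    rintro (i | i)
    · exact CS_vW c i
    · exact CS_vS1 c i
  have hφ : Function.Injective φ := by
    intro x y hxy
    by_contra hne
    exact hdist (g1 r x) (g1 r y) (fun e => hne (g1_inj e))
      (by rw [hCS x, hCS y, hxy])
  have hcard : r + 2 ≤ k := by simpa using Fintype.card_le_of_injective φ hφ
  rcases Nat.lt_or_ge k (r + 3) with hk | hk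
  swap
  · exact hk
  exfalso
  have hkeq : k = r + 2 := by omega
  subst hkeq
  have hψ : Function.Injective ψ := by
    intro x y hxy
    by_contra hne
    have hadj : ∀ z : Fin r ⊕ Fin 2, (Gr r).Adj vO (g0 r z) := by
      rintro (i | i)
      · exact adj_vO_vW i
      · exact adj_vO_vS0 i
    exact hproper (hadj x) (hadj y) (fun e => hne (g0_inj e)) hxy
  have hbij : Function.Bijective ψ :=
    (Fintype.bijective_iff_injective_and_card ψ).mpr ⟨hψ, by simp⟩
  have key : ∀ i : Fin 2, φ (Sum.inr i) = ψ (Sum.inr (i + 1)) := by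
    intro i
    obtain ⟨y, hy⟩ := hbij.2 (φ (Sum.inr i))
    rcases y with j | j
    · exfalso
      have : φ (Sum.inl j) = φ (Sum.inr i) := by
        rw [← hy]
        exact (congrArg c Sym2.eq_swap).symm
      exact absurd (hφ this) (by simp)
    · have hji : j ≠ i := by
        intro e
        subst e
        refine hproper (adj_vS0_vO j) (adj_vS0_vS1 j) (by simp) ?_
        calc c s(vS j 0, vO) = ψ (Sum.inr j) := congrArg c Sym2.eq_swap
          _ = φ (Sum.inr j) := hy
          _ = c s(vS j 0, vS j 1) := congrArg c Sym2.eq_swap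
      have : j = i + 1 := by
        rcases Fin.exists_fin_two.mp ⟨i, rfl⟩ with rfl | rfl <;>
          rcases Fin.exists_fin_two.mp ⟨j, rfl⟩ with rfl | rfl <;>
          first | rfl | (exact absurd rfl hji) | decide
      rw [← this, hy]
  have e0 : c s(vS 0 0, vO) = ψ (Sum.inr 0) := congrArg c Sym2.eq_swap
  have e1 : c s(vS 1 0, vO) = ψ (Sum.inr 1) := congrArg c Sym2.eq_swap
  have f0 : c s(vS 0 0, vS 0 1) = φ (Sum.inr 0) := congrArg c Sym2.eq_swap
  have f1 : c s(vS 1 0, vS 1 1) = φ (Sum.inr 1) := congrArg c Sym2.eq_swap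
  refine hdist (vS 0 0) (vS 1 0) (by simp [Prod.ext_iff]) ?_
  rw [CS_vS0 c 0, CS_vS0 c 1, e0, e1, f0, f1, key 0, key 1]
  show ({ψ (Sum.inr 0), ψ (Sum.inr (0 + 1))} : Set _) = {ψ (Sum.inr 1), ψ (Sum.inr (1 + 1))}
  have : (1 + 1 : Fin 2) = 0 := rfl
  rw [this]
  norm_num
  exact Set.pair_comm _ _

end VQ

namespace VQ
variable {r : ℕ}

lemma CSet_vW (i : Fin r) : CSet r (vW i) = {cF r s(vW i, vO)} := CS_vW _ i
lemma CSet_vS1 (i : Fin 2) : CSet r (vS i 1) = {cF r s(vS i 1, vS i 0)} := CS_vS1 _ i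

lemma distinguish_cF (hr : 1 ≤ r) :
    ∀ u v : Vr r, u ≠ v → CSet r u ≠ CSet r v := by
  intro u v huv
  rcases u with ⟨⟩ | i | ⟨i, ji⟩ | u'
  · rcases v with ⟨⟩ | j | ⟨j, jj⟩ | v'
    · exact absurd rfl huv
    · exact d_OW j
    · rcases Fin.exists_fin_two.mp ⟨jj, rfl⟩ with rfl | rfl
      · exact d_OS0 hr j
      · exact d_OS1 j
    · rcases v' with z | ⟨z, _⟩ <;> exact z.elim0
  · rcases v with ⟨⟩ | j | ⟨j, jj⟩ | v'
    · exact (d_OW i).symm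
    · exact d_WW (fun e => huv (by rw [e]))
    · rcases Fin.exists_fin_two.mp ⟨jj, rfl⟩ with rfl | rfl
      · rw [CSet_vW]
        exact (d_S0_sing j _).symm
      · exact d_WS1 i j
    · rcases v' with z | ⟨z, _⟩ <;> exact z.elim0
  · rcases Fin.exists_fin_two.mp ⟨ji, rfl⟩ with rfl | rfl
    · rcases v with ⟨⟩ | j | ⟨j, jj⟩ | v'
      · exact (d_OS0 hr i).symm
      · rw [CSet_vW]
        exact d_S0_sing i _
      · rcases Fin.exists_fin_two.mp ⟨jj, rfl⟩ with rfl | rfl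
        · exact d_S0S0 (fun e => huv (by rw [e]))
        · rw [CSet_vS1]
          exact d_S0_sing i _
      · rcases v' with z | ⟨z, _⟩ <;> exact z.elim0
    · rcases v with ⟨⟩ | j | ⟨j, jj⟩ | v'
      · exact (d_OS1 i).symm
      · exact (d_WS1 j i).symm
      · rcases Fin.exists_fin_two.mp ⟨jj, rfl⟩ with rfl | rfl
        · rw [CSet_vS1]
          exact (d_S0_sing j _).symm
        · exact d_S1S1 (fun e => huv (by rw [e]))
      · rcases v' with z | ⟨z, _⟩ <;> exact z.elim0
  · rcases u' with z | ⟨z, _⟩ <;> exact z.elim0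

end VQ

/-- For `Q = Q(r,2,0)` with `r ≥ 1`, `χ'ₛ(Q) = n₁(Q) + 1 = r + 3`. -/
theorem vdecNum_QGraph_r20 (r : ℕ) (hr : 1 ≤ r) :
    vdecNum (QGraph r 2 0 Fin.elim0) = numDeg (QGraph r 2 0 Fin.elim0) 1 + 1 ∧
    numDeg (QGraph r 2 0 Fin.elim0) 1 + 1 = r + 3 := by
  have h1 : numDeg (QGraph r 2 0 Fin.elim0) 1 = r + 2 := VQ.numDeg_one
  refine ⟨?_, by rw [h1]⟩
  rw [h1]
  have hmem : ∃ c : Sym2 (VQ.Vr r) → Fin (r + 3), IsVDEC (VQ.Gr r) (r + 3) c :=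
    ⟨VQ.cF r, VQ.proper_cF, fun u v huv => VQ.distinguish_cF hr u v huv⟩
  apply le_antisymm
  · exact Nat.sInf_le hmem
  · exact le_csInf ⟨r + 3, hmem⟩ (fun k hk => by
      obtain ⟨c, hc⟩ := hk
      exact VQ.lower hr c hc)
end

section
/- Let Q = Q(0,1,1), i.e., the tree with center w_0 adjacent to s_1 (where s_1 has one leaf neighbor s'_1) and to t_1 (where t_1 has r_1 ≥ 2 leaf neighbors). Then χ'_s(Q) = n_1(Q) + 1 = r_1 + 2. -/
open SimpleGraph

variable {V : Type*}

namespace Aux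
variable (rv : Fin 1 → ℕ)

def w0 : QVert 0 1 1 rv := Sum.inl ()
def s1 : QVert 0 1 1 rv := Sum.inr (Sum.inr (Sum.inl (0, 0)))
def s1' : QVert 0 1 1 rv := Sum.inr (Sum.inr (Sum.inl (0, 1)))
def t1 : QVert 0 1 1 rv := Sum.inr (Sum.inr (Sum.inr (Sum.inl 0)))
def tl (j : Fin (rv 0)) : QVert 0 1 1 rv := Sum.inr (Sum.inr (Sum.inr (Sum.inr ⟨0, j⟩)))

lemma adj_iff (a b : QVert 0 1 1 rv) : (QGraph 0 1 1 rv).Adj a b ↔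
    ((a = w0 rv ∧ (b = s1 rv ∨ b = t1 rv)) ∨ (b = w0 rv ∧ (a = s1 rv ∨ a = t1 rv)) ∨
     (a = s1 rv ∧ b = s1' rv) ∨ (b = s1 rv ∧ a = s1' rv) ∨
     (∃ j, a = t1 rv ∧ b = tl rv j) ∨ (∃ j, b = t1 rv ∧ a = tl rv j)) := by
  constructor
  · rintro ⟨hne, h | h⟩ <;>
    · simp only [w0, s1, s1', t1, tl]
      rcases h with ⟨h1, (⟨i, h2⟩ | ⟨i, h2⟩ | ⟨i, h2⟩)⟩ | ⟨i, h1, h2⟩ | ⟨i, j, h1, h2⟩ <;>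
        [skip; skip; skip; skip; skip] <;>
        first
          | exact absurd i.2 (by omega)
          | (obtain rfl : i = 0 := Subsingleton.elim i 0
             subst h1; subst h2; simp; try tauto)
  · intro h
    rcases h with ⟨h1, h2 | h2⟩ | ⟨h1, h2 | h2⟩ | ⟨h1, h2⟩ | ⟨h1, h2⟩ | ⟨j, h1, h2⟩ | ⟨j, h1, h2⟩ <;>
      subst h1 <;> subst h2 <;>
      refine ⟨by simp [w0, s1, s1', t1, tl, Prod.ext_iff, Fin.ext_iff], ?_⟩ <;>
      simp [w0, s1, s1', t1, tl, QGraph, Prod.ext_iff, Fin.ext_iff] <;> first | tauto | decide | simp [Prod.ext_iff, Fin.ext_iff]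


lemma ne1 : w0 rv ≠ s1 rv := by simp [w0, s1]
lemma ne2 : w0 rv ≠ s1' rv := by simp [w0, s1']
lemma ne3 : w0 rv ≠ t1 rv := by simp [w0, t1]
lemma ne4 : s1 rv ≠ s1' rv := by
  intro h
  simp only [s1, s1', Sum.inr.injEq, Sum.inl.injEq, Prod.mk.injEq] at h
  exact absurd h.2 (by decide)
lemma ne5 : s1 rv ≠ t1 rv := by simp [s1, t1]
lemma ne6 : s1' rv ≠ t1 rv := by simp [s1', t1]
lemma w0_ne_tl (j) : w0 rv ≠ tl rv j := by simp [w0, tl]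
lemma s1_ne_tl (j) : s1 rv ≠ tl rv j := by simp [s1, tl]
lemma s1'_ne_tl (j) : s1' rv ≠ tl rv j := by simp [s1', tl]
lemma t1_ne_tl (j) : t1 rv ≠ tl rv j := by simp [t1, tl]
lemma tl_inj : Function.Injective (tl rv) := by
  intro a b h
  simpa [tl] using h

lemma nbhd_w0 : (QGraph 0 1 1 rv).neighborSet (w0 rv) = {s1 rv, t1 rv} := by
  ext x
  rw [SimpleGraph.mem_neighborSet, adj_iff]
  simp only [Set.mem_insert_iff, Set.mem_singleton_iff]
  constructor
  · rintro (⟨-, h⟩ | ⟨-, h | h⟩ | ⟨h, -⟩ | ⟨-, h⟩ | ⟨j, h, -⟩ | ⟨j, -, h⟩)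
    · exact h
    · exact absurd h (ne1 rv)
    · exact absurd h (ne3 rv)
    · exact absurd h (ne1 rv)
    · exact absurd h (ne2 rv)
    · exact absurd h (ne3 rv)
    · exact absurd h (w0_ne_tl rv j)
  · rintro (rfl | rfl)
    · exact Or.inl ⟨by trivial, Or.inl (by trivial)⟩
    · exact Or.inl ⟨by trivial, Or.inr (by trivial)⟩

lemma nbhd_s1 : (QGraph 0 1 1 rv).neighborSet (s1 rv) = {w0 rv, s1' rv} := by
  ext x
  rw [SimpleGraph.mem_neighborSet, adj_iff]
  simp only [Set.mem_insert_iff, Set.mem_singleton_iff]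
  constructor
  · rintro (⟨h, -⟩ | ⟨h, -⟩ | ⟨-, h⟩ | ⟨-, h⟩ | ⟨j, h, -⟩ | ⟨j, -, h⟩)
    · exact absurd h.symm (ne1 rv)
    · exact Or.inl h
    · exact Or.inr h
    · exact absurd h (ne4 rv)
    · exact absurd h (ne5 rv)
    · exact absurd h (s1_ne_tl rv j)
  · rintro (rfl | rfl)
    · exact Or.inr (Or.inl ⟨by trivial, Or.inl (by trivial)⟩)
    · exact Or.inr (Or.inr (Or.inl ⟨by trivial, by trivial⟩))

lemma nbhd_s1' : (QGraph 0 1 1 rv).neighborSet (s1' rv) = {s1 rv} := by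
  ext x
  rw [SimpleGraph.mem_neighborSet, adj_iff]
  simp only [Set.mem_singleton_iff]
  constructor
  · rintro (⟨h, -⟩ | ⟨-, h | h⟩ | ⟨h, -⟩ | ⟨h, -⟩ | ⟨j, h, -⟩ | ⟨j, -, h⟩)
    · exact absurd h.symm (ne2 rv)
    · exact absurd h.symm (ne4 rv)
    · exact absurd h (ne6 rv)
    · exact absurd h.symm (ne4 rv)
    · exact h
    · exact absurd h (ne6 rv)
    · exact absurd h (s1'_ne_tl rv j)
  · rintro rfl
    exact Or.inr (Or.inr (Or.inr (Or.inl ⟨by trivial, by trivial⟩)))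

lemma nbhd_t1 : (QGraph 0 1 1 rv).neighborSet (t1 rv) =
    insert (w0 rv) (Set.range (tl rv)) := by
  ext x
  rw [SimpleGraph.mem_neighborSet, adj_iff]
  simp only [Set.mem_insert_iff, Set.mem_range]
  constructor
  · rintro (⟨h, -⟩ | ⟨h, -⟩ | ⟨h, -⟩ | ⟨-, h⟩ | ⟨j, -, h⟩ | ⟨j, -, h⟩)
    · exact absurd h.symm (ne3 rv)
    · exact Or.inl h
    · exact absurd h.symm (ne5 rv)
    · exact absurd h.symm (ne6 rv)
    · exact Or.inr ⟨j, h.symm⟩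
    · exact absurd h (t1_ne_tl rv j)
  · rintro (rfl | ⟨j, rfl⟩)
    · exact Or.inr (Or.inl ⟨by trivial, Or.inr (by trivial)⟩)
    · exact Or.inr (Or.inr (Or.inr (Or.inr (Or.inl ⟨j, by trivial, by trivial⟩))))

lemma nbhd_tl (j) : (QGraph 0 1 1 rv).neighborSet (tl rv j) = {t1 rv} := by
  ext x
  rw [SimpleGraph.mem_neighborSet, adj_iff]
  simp only [Set.mem_singleton_iff]
  constructor
  · rintro (⟨h, -⟩ | ⟨-, h | h⟩ | ⟨h, -⟩ | ⟨-, h⟩ | ⟨i, h, -⟩ | ⟨i, h, -⟩)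
    · exact absurd h.symm (w0_ne_tl rv j)
    · exact absurd h.symm (s1_ne_tl rv j)
    · exact absurd h.symm (t1_ne_tl rv j)
    · exact absurd h.symm (s1_ne_tl rv j)
    · exact absurd h.symm (s1'_ne_tl rv j)
    · exact absurd h.symm (t1_ne_tl rv j)
    · exact h
  · rintro rfl
    exact Or.inr (Or.inr (Or.inr (Or.inr (Or.inr ⟨j, by trivial, by trivial⟩))))


lemma deg_w0 : Nat.card ((QGraph 0 1 1 rv).neighborSet (w0 rv)) = 2 := by
  rw [nbhd_w0, Nat.card_coe_set_eq, Set.ncard_pair (ne5 rv)]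

lemma deg_s1 : Nat.card ((QGraph 0 1 1 rv).neighborSet (s1 rv)) = 2 := by
  rw [nbhd_s1, Nat.card_coe_set_eq, Set.ncard_pair (ne2 rv)]

lemma deg_s1' : Nat.card ((QGraph 0 1 1 rv).neighborSet (s1' rv)) = 1 := by
  rw [nbhd_s1', Nat.card_coe_set_eq, Set.ncard_singleton]

lemma deg_tl (j) : Nat.card ((QGraph 0 1 1 rv).neighborSet (tl rv j)) = 1 := by
  rw [nbhd_tl, Nat.card_coe_set_eq, Set.ncard_singleton]

lemma deg_t1 : Nat.card ((QGraph 0 1 1 rv).neighborSet (t1 rv)) = rv 0 + 1 := by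
  rw [nbhd_t1, Nat.card_coe_set_eq,
    Set.ncard_insert_of_notMem (by rintro ⟨j, hj⟩; exact w0_ne_tl rv j hj.symm)
      (Set.finite_range _)]
  rw [← Nat.card_coe_set_eq, Nat.card_range_of_injective (tl_inj rv)]
  simp

lemma numDeg_one (hrv : 1 ≤ rv 0) : numDeg (QGraph 0 1 1 rv) 1 = rv 0 + 1 := by
  have e : Option (Fin (rv 0)) ≃
      {v : QVert 0 1 1 rv // Nat.card ((QGraph 0 1 1 rv).neighborSet v) = 1} := by
    refine Equiv.ofBijective
      (fun o => Option.elim o ⟨s1' rv, deg_s1' rv⟩ (fun j => ⟨tl rv j, deg_tl rv j⟩)) ⟨?_, ?_⟩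
    · rintro (_ | a) (_ | b) h <;> simp only [Option.elim, Subtype.mk.injEq] at h
      · rfl
      · exact absurd h (s1'_ne_tl rv b)
      · exact absurd h.symm (s1'_ne_tl rv a)
      · rw [tl_inj rv h]
    · rintro ⟨v, hv⟩
      rcases v with _ | i | ⟨i, j⟩ | i | ⟨i, j⟩
      · have hv' : Nat.card ((QGraph 0 1 1 rv).neighborSet (w0 rv)) = 1 := hv
        rw [deg_w0] at hv'
        exact absurd hv' (by omega)
      · exact i.elim0
      · obtain rfl : i = 0 := Subsingleton.elim i 0
        fin_cases j
        · have hv' : Nat.card ((QGraph 0 1 1 rv).neighborSet (s1 rv)) = 1 := hv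
          rw [deg_s1] at hv'
          exact absurd hv' (by omega)
        · exact ⟨none, rfl⟩
      · obtain rfl : i = 0 := Subsingleton.elim i 0
        have hv' : Nat.card ((QGraph 0 1 1 rv).neighborSet (t1 rv)) = 1 := hv
        rw [deg_t1] at hv'
        exact absurd hv' (by omega)
      · obtain rfl : i = 0 := Subsingleton.elim i 0
        exact ⟨some j, rfl⟩
  rw [numDeg, ← Nat.card_congr e, Nat.card_eq_fintype_card]
  simp


def fcol : QVert 0 1 1 rv → QVert 0 1 1 rv → Fin (rv 0 + 2)
  | Sum.inl _, Sum.inr (Sum.inr (Sum.inl _)) => ⟨0, by omega⟩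
  | Sum.inr (Sum.inr (Sum.inl _)), Sum.inl _ => ⟨0, by omega⟩
  | Sum.inl _, Sum.inr (Sum.inr (Sum.inr _)) => ⟨rv 0, by omega⟩
  | Sum.inr (Sum.inr (Sum.inr _)), Sum.inl _ => ⟨rv 0, by omega⟩
  | Sum.inr (Sum.inr (Sum.inl _)), Sum.inr (Sum.inr (Sum.inl _)) => ⟨rv 0 + 1, by omega⟩
  | Sum.inr (Sum.inr (Sum.inr (Sum.inl _))), Sum.inr (Sum.inr (Sum.inr (Sum.inr ⟨i, j⟩))) =>
      ⟨j.val, by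
        have hj := j.isLt
        have hi : i = 0 := Subsingleton.elim i 0
        subst hi; omega⟩
  | Sum.inr (Sum.inr (Sum.inr (Sum.inr ⟨i, j⟩))), Sum.inr (Sum.inr (Sum.inr (Sum.inl _))) =>
      ⟨j.val, by
        have hj := j.isLt
        have hi : i = 0 := Subsingleton.elim i 0
        subst hi; omega⟩
  | _, _ => ⟨0, by omega⟩

lemma fcol_symm (a b : QVert 0 1 1 rv) : fcol rv a b = fcol rv b a := by
  rcases a with _ | a | ⟨a1, a2⟩ | a | ⟨a1, a2⟩ <;>
    rcases b with _ | b | ⟨b1, b2⟩ | b | ⟨b1, b2⟩ <;>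
    first
    | rfl
    | exact a.elim0
    | exact b.elim0

noncomputable def ccol : Sym2 (QVert 0 1 1 rv) → Fin (rv 0 + 2) :=
  Sym2.lift ⟨fcol rv, fcol_symm rv⟩

lemma ccol_mk (a b) : ccol rv s(a, b) = fcol rv a b := Sym2.lift_mk _ _ _

lemma cval1 : (ccol rv s(w0 rv, s1 rv)).val = 0 := by rw [ccol_mk]; rfl
lemma cval2 : (ccol rv s(w0 rv, t1 rv)).val = rv 0 := by rw [ccol_mk]; rfl
lemma cval3 : (ccol rv s(s1 rv, s1' rv)).val = rv 0 + 1 := by rw [ccol_mk]; rfl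
lemma cval4 (j) : (ccol rv s(t1 rv, tl rv j)).val = j.val := by rw [ccol_mk]; rfl
lemma cval1' : (ccol rv s(s1 rv, w0 rv)).val = 0 := by rw [ccol_mk]; rfl
lemma cval2' : (ccol rv s(t1 rv, w0 rv)).val = rv 0 := by rw [ccol_mk]; rfl
lemma cval3' : (ccol rv s(s1' rv, s1 rv)).val = rv 0 + 1 := by rw [ccol_mk]; rfl
lemma cval4' (j) : (ccol rv s(tl rv j, t1 rv)).val = j.val := by rw [ccol_mk]; rfl


lemma adj_w0_s1 : (QGraph 0 1 1 rv).Adj (w0 rv) (s1 rv) := by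
  rw [adj_iff]; exact Or.inl ⟨rfl, Or.inl rfl⟩
lemma adj_w0_t1 : (QGraph 0 1 1 rv).Adj (w0 rv) (t1 rv) := by
  rw [adj_iff]; exact Or.inl ⟨rfl, Or.inr rfl⟩
lemma adj_s1_s1' : (QGraph 0 1 1 rv).Adj (s1 rv) (s1' rv) := by
  rw [adj_iff]; exact Or.inr (Or.inr (Or.inl ⟨rfl, rfl⟩))
lemma adj_t1_tl (j) : (QGraph 0 1 1 rv).Adj (t1 rv) (tl rv j) := by
  rw [adj_iff]; exact Or.inr (Or.inr (Or.inr (Or.inr (Or.inl ⟨j, rfl, rfl⟩))))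

def cset {k : ℕ} (c : Sym2 (QVert 0 1 1 rv) → Fin k) (u : QVert 0 1 1 rv) : Set (Fin k) :=
  {i | ∃ w, (QGraph 0 1 1 rv).Adj u w ∧ c s(u, w) = i}

variable {k : ℕ} (c : Sym2 (QVert 0 1 1 rv) → Fin k)

lemma cset_w0 : cset rv c (w0 rv) =
    {c s(w0 rv, s1 rv), c s(w0 rv, t1 rv)} := by
  ext i
  simp only [cset, Set.mem_setOf_eq, Set.mem_insert_iff, Set.mem_singleton_iff]
  constructor
  · rintro ⟨x, hx, rfl⟩
    have hx' : x ∈ (QGraph 0 1 1 rv).neighborSet (w0 rv) := hx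
    rw [nbhd_w0] at hx'
    rcases hx' with rfl | rfl
    · exact Or.inl rfl
    · exact Or.inr rfl
  · rintro (rfl | rfl)
    · exact ⟨s1 rv, adj_w0_s1 rv, rfl⟩
    · exact ⟨t1 rv, adj_w0_t1 rv, rfl⟩

lemma cset_s1 : cset rv c (s1 rv) =
    {c s(s1 rv, w0 rv), c s(s1 rv, s1' rv)} := by
  ext i
  simp only [cset, Set.mem_setOf_eq, Set.mem_insert_iff, Set.mem_singleton_iff]
  constructor
  · rintro ⟨x, hx, rfl⟩
    have hx' : x ∈ (QGraph 0 1 1 rv).neighborSet (s1 rv) := hx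
    rw [nbhd_s1] at hx'
    rcases hx' with rfl | rfl
    · exact Or.inl rfl
    · exact Or.inr rfl
  · rintro (rfl | rfl)
    · exact ⟨w0 rv, (adj_w0_s1 rv).symm, rfl⟩
    · exact ⟨s1' rv, adj_s1_s1' rv, rfl⟩

lemma cset_s1' : cset rv c (s1' rv) = {c s(s1' rv, s1 rv)} := by
  ext i
  simp only [cset, Set.mem_setOf_eq, Set.mem_singleton_iff]
  constructor
  · rintro ⟨x, hx, rfl⟩
    have hx' : x ∈ (QGraph 0 1 1 rv).neighborSet (s1' rv) := hx
    rw [nbhd_s1'] at hx'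
    rcases hx' with rfl
    rfl
  · rintro rfl
    exact ⟨s1 rv, (adj_s1_s1' rv).symm, rfl⟩

lemma cset_t1 : cset rv c (t1 rv) =
    insert (c s(t1 rv, w0 rv)) (Set.range fun j => c s(t1 rv, tl rv j)) := by
  ext i
  simp only [cset, Set.mem_setOf_eq, Set.mem_insert_iff, Set.mem_range]
  constructor
  · rintro ⟨x, hx, rfl⟩
    have hx' : x ∈ (QGraph 0 1 1 rv).neighborSet (t1 rv) := hx
    rw [nbhd_t1] at hx'
    rcases hx' with rfl | ⟨j, rfl⟩
    · exact Or.inl rfl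
    · exact Or.inr ⟨j, rfl⟩
  · rintro (rfl | ⟨j, rfl⟩)
    · exact ⟨w0 rv, (adj_w0_t1 rv).symm, rfl⟩
    · exact ⟨tl rv j, adj_t1_tl rv j, rfl⟩

lemma cset_tl (j) : cset rv c (tl rv j) = {c s(tl rv j, t1 rv)} := by
  ext i
  simp only [cset, Set.mem_setOf_eq, Set.mem_singleton_iff]
  constructor
  · rintro ⟨x, hx, rfl⟩
    have hx' : x ∈ (QGraph 0 1 1 rv).neighborSet (tl rv j) := hx
    rw [nbhd_tl] at hx'
    rcases hx' with rfl
    rfl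
  · rintro rfl
    exact ⟨t1 rv, (adj_t1_tl rv j).symm, rfl⟩


variable (hrv : 2 ≤ rv 0)
include hrv

lemma csne1 : cset rv (ccol rv) (w0 rv) ≠ cset rv (ccol rv) (s1 rv) := by
  rw [cset_w0, cset_s1]
  intro heq
  have h := heq ▸ (Set.mem_insert_of_mem _ rfl :
    ccol rv s(w0 rv, t1 rv) ∈ ({ccol rv s(w0 rv, s1 rv), ccol rv s(w0 rv, t1 rv)} : Set _))
  rcases Set.mem_insert_iff.mp h with h | h <;> apply congrArg Fin.val at h
  · rw [cval2, cval1'] at h; omega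
  · rw [cval2, cval3] at h; omega

lemma csne2 : cset rv (ccol rv) (w0 rv) ≠ cset rv (ccol rv) (s1' rv) := by
  rw [cset_w0, cset_s1']
  intro heq
  have h := heq ▸ (Set.mem_insert _ _ :
    ccol rv s(w0 rv, s1 rv) ∈ ({ccol rv s(w0 rv, s1 rv), ccol rv s(w0 rv, t1 rv)} : Set _))
  rw [Set.mem_singleton_iff] at h
  apply congrArg Fin.val at h
  rw [cval1, cval3'] at h; omega

lemma csne3 : cset rv (ccol rv) (w0 rv) ≠ cset rv (ccol rv) (t1 rv) := by
  rw [cset_w0, cset_t1]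
  intro heq
  have h1 : (1 : ℕ) < rv 0 := by omega
  have h := heq.symm ▸ (Set.mem_insert_of_mem _ ⟨⟨1, h1⟩, rfl⟩ :
    ccol rv s(t1 rv, tl rv ⟨1, h1⟩) ∈
      insert (ccol rv s(t1 rv, w0 rv)) (Set.range fun j => ccol rv s(t1 rv, tl rv j)))
  rcases Set.mem_insert_iff.mp h with h | h
  · apply congrArg Fin.val at h
    rw [cval4, cval1] at h; exact absurd h (by simp)
  · rw [Set.mem_singleton_iff] at h
    apply congrArg Fin.val at h
    rw [cval4, cval2] at h; simp at h; omega

lemma csne4 (j) : cset rv (ccol rv) (w0 rv) ≠ cset rv (ccol rv) (tl rv j) := by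
  rw [cset_w0, cset_tl]
  intro heq
  have ha := heq ▸ (Set.mem_insert _ _ :
    ccol rv s(w0 rv, s1 rv) ∈ ({ccol rv s(w0 rv, s1 rv), ccol rv s(w0 rv, t1 rv)} : Set _))
  have hb := heq ▸ (Set.mem_insert_of_mem _ rfl :
    ccol rv s(w0 rv, t1 rv) ∈ ({ccol rv s(w0 rv, s1 rv), ccol rv s(w0 rv, t1 rv)} : Set _))
  rw [Set.mem_singleton_iff] at ha hb
  apply congrArg Fin.val at ha
  apply congrArg Fin.val at hb
  rw [cval1, cval4'] at ha
  rw [cval2, cval4'] at hb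
  omega

lemma csne5 : cset rv (ccol rv) (s1 rv) ≠ cset rv (ccol rv) (s1' rv) := by
  rw [cset_s1, cset_s1']
  intro heq
  have h := heq ▸ (Set.mem_insert _ _ :
    ccol rv s(s1 rv, w0 rv) ∈ ({ccol rv s(s1 rv, w0 rv), ccol rv s(s1 rv, s1' rv)} : Set _))
  rw [Set.mem_singleton_iff] at h
  apply congrArg Fin.val at h
  rw [cval1', cval3'] at h; omega

lemma csne6 : cset rv (ccol rv) (s1 rv) ≠ cset rv (ccol rv) (t1 rv) := by
  rw [cset_s1, cset_t1]
  intro heq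
  have h := heq ▸ (Set.mem_insert_of_mem _ rfl :
    ccol rv s(s1 rv, s1' rv) ∈ ({ccol rv s(s1 rv, w0 rv), ccol rv s(s1 rv, s1' rv)} : Set _))
  rcases Set.mem_insert_iff.mp h with h | h
  · apply congrArg Fin.val at h
    rw [cval3, cval2'] at h; omega
  · rw [Set.mem_range] at h
    obtain ⟨j, hj⟩ := h
    apply congrArg Fin.val at hj
    rw [cval4, cval3] at hj
    have := j.isLt; omega

lemma csne7 (j) : cset rv (ccol rv) (s1 rv) ≠ cset rv (ccol rv) (tl rv j) := by
  rw [cset_s1, cset_tl]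
  intro heq
  have ha := heq ▸ (Set.mem_insert _ _ :
    ccol rv s(s1 rv, w0 rv) ∈ ({ccol rv s(s1 rv, w0 rv), ccol rv s(s1 rv, s1' rv)} : Set _))
  have hb := heq ▸ (Set.mem_insert_of_mem _ rfl :
    ccol rv s(s1 rv, s1' rv) ∈ ({ccol rv s(s1 rv, w0 rv), ccol rv s(s1 rv, s1' rv)} : Set _))
  rw [Set.mem_singleton_iff] at ha hb
  apply congrArg Fin.val at ha
  apply congrArg Fin.val at hb
  rw [cval1', cval4'] at ha
  rw [cval3, cval4'] at hb
  omega

lemma csne8 : cset rv (ccol rv) (s1' rv) ≠ cset rv (ccol rv) (t1 rv) := by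
  rw [cset_s1', cset_t1]
  intro heq
  have h := heq ▸ (Set.mem_singleton _ :
    ccol rv s(s1' rv, s1 rv) ∈ ({ccol rv s(s1' rv, s1 rv)} : Set _))
  rcases Set.mem_insert_iff.mp h with h | h
  · apply congrArg Fin.val at h
    rw [cval3', cval2'] at h; omega
  · rw [Set.mem_range] at h
    obtain ⟨j, hj⟩ := h
    apply congrArg Fin.val at hj
    rw [cval4, cval3'] at hj
    have := j.isLt; omega

lemma csne9 (j) : cset rv (ccol rv) (s1' rv) ≠ cset rv (ccol rv) (tl rv j) := by
  rw [cset_s1', cset_tl]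
  intro heq
  have h := heq ▸ (Set.mem_singleton _ :
    ccol rv s(s1' rv, s1 rv) ∈ ({ccol rv s(s1' rv, s1 rv)} : Set _))
  rw [Set.mem_singleton_iff] at h
  apply congrArg Fin.val at h
  rw [cval3', cval4'] at h
  have := j.isLt; omega

lemma csne10 (j) : cset rv (ccol rv) (t1 rv) ≠ cset rv (ccol rv) (tl rv j) := by
  rw [cset_t1, cset_tl]
  intro heq
  have ha := heq ▸ (Set.mem_insert _ _ :
    ccol rv s(t1 rv, w0 rv) ∈
      insert (ccol rv s(t1 rv, w0 rv)) (Set.range fun j => ccol rv s(t1 rv, tl rv j)))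
  have hb := heq ▸ (Set.mem_insert_of_mem _ ⟨j, rfl⟩ :
    ccol rv s(t1 rv, tl rv j) ∈
      insert (ccol rv s(t1 rv, w0 rv)) (Set.range fun j => ccol rv s(t1 rv, tl rv j)))
  rw [Set.mem_singleton_iff] at ha hb
  apply congrArg Fin.val at ha
  apply congrArg Fin.val at hb
  rw [cval2', cval4'] at ha
  rw [cval4, cval4'] at hb
  have := j.isLt; omega

omit hrv in
lemma csne11 {j j'} (h : j ≠ j') : cset rv (ccol rv) (tl rv j) ≠ cset rv (ccol rv) (tl rv j') := by
  rw [cset_tl, cset_tl]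
  intro heq
  have hm := heq ▸ (Set.mem_singleton _ :
    ccol rv s(tl rv j, t1 rv) ∈ ({ccol rv s(tl rv j, t1 rv)} : Set _))
  rw [Set.mem_singleton_iff] at hm
  apply congrArg Fin.val at hm
  rw [cval4', cval4'] at hm
  exact h (Fin.ext hm)


omit hrv in
lemma vert_cases (v : QVert 0 1 1 rv) :
    v = w0 rv ∨ v = s1 rv ∨ v = s1' rv ∨ v = t1 rv ∨ ∃ j, v = tl rv j := by
  rcases v with ⟨⟩ | i | ⟨i, j2⟩ | i | ⟨i, j⟩
  · exact Or.inl rfl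
  · exact i.elim0
  · obtain rfl : i = 0 := Subsingleton.elim i 0
    fin_cases j2
    · exact Or.inr (Or.inl rfl)
    · exact Or.inr (Or.inr (Or.inl rfl))
  · obtain rfl : i = 0 := Subsingleton.elim i 0
    exact Or.inr (Or.inr (Or.inr (Or.inl rfl)))
  · obtain rfl : i = 0 := Subsingleton.elim i 0
    exact Or.inr (Or.inr (Or.inr (Or.inr ⟨j, rfl⟩)))

lemma ccol_proper : ∀ ⦃u v w : QVert 0 1 1 rv⦄, (QGraph 0 1 1 rv).Adj u v →
    (QGraph 0 1 1 rv).Adj u w → v ≠ w → ccol rv s(u, v) ≠ ccol rv s(u, w) := by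
  intro u v w huv huw hvw
  rcases vert_cases rv u with rfl | rfl | rfl | rfl | ⟨j, rfl⟩
  · have hv : v ∈ (QGraph 0 1 1 rv).neighborSet (w0 rv) := huv
    have hw : w ∈ (QGraph 0 1 1 rv).neighborSet (w0 rv) := huw
    rw [nbhd_w0] at hv hw
    rcases hv with rfl | rfl <;> rcases hw with rfl | rfl
    · exact absurd rfl hvw
    · intro h; apply congrArg Fin.val at h; rw [cval1, cval2] at h; omega
    · intro h; apply congrArg Fin.val at h; rw [cval1, cval2] at h; omega
    · exact absurd rfl hvw
  · have hv : v ∈ (QGraph 0 1 1 rv).neighborSet (s1 rv) := huv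
    have hw : w ∈ (QGraph 0 1 1 rv).neighborSet (s1 rv) := huw
    rw [nbhd_s1] at hv hw
    rcases hv with rfl | rfl <;> rcases hw with rfl | rfl
    · exact absurd rfl hvw
    · intro h; apply congrArg Fin.val at h; rw [cval1', cval3] at h; omega
    · intro h; apply congrArg Fin.val at h; rw [cval1', cval3] at h; omega
    · exact absurd rfl hvw
  · have hv : v ∈ (QGraph 0 1 1 rv).neighborSet (s1' rv) := huv
    have hw : w ∈ (QGraph 0 1 1 rv).neighborSet (s1' rv) := huw
    rw [nbhd_s1'] at hv hw
    rcases hv with rfl; rcases hw with rfl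
    exact absurd rfl hvw
  · have hv : v ∈ (QGraph 0 1 1 rv).neighborSet (t1 rv) := huv
    have hw : w ∈ (QGraph 0 1 1 rv).neighborSet (t1 rv) := huw
    rw [nbhd_t1] at hv hw
    rcases hv with rfl | ⟨a, rfl⟩ <;> rcases hw with rfl | ⟨b, rfl⟩
    · exact absurd rfl hvw
    · intro h; apply congrArg Fin.val at h; rw [cval2', cval4] at h
      have := b.isLt; omega
    · intro h; apply congrArg Fin.val at h; rw [cval2', cval4] at h
      have := a.isLt; omega
    · intro h; apply congrArg Fin.val at h; rw [cval4, cval4] at h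
      exact hvw (by rw [Fin.ext h])
  · have hv : v ∈ (QGraph 0 1 1 rv).neighborSet (tl rv j) := huv
    have hw : w ∈ (QGraph 0 1 1 rv).neighborSet (tl rv j) := huw
    rw [nbhd_tl] at hv hw
    rcases hv with rfl; rcases hw with rfl
    exact absurd rfl hvw

lemma ccol_vdec : IsVDEC (QGraph 0 1 1 rv) (rv 0 + 2) (ccol rv) := by
  refine ⟨ccol_proper rv hrv, ?_⟩
  intro u v huv
  show cset rv (ccol rv) u ≠ cset rv (ccol rv) v
  rcases vert_cases rv u with rfl | rfl | rfl | rfl | ⟨j, rfl⟩ <;>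
    rcases vert_cases rv v with rfl | rfl | rfl | rfl | ⟨j', rfl⟩ <;>
    first
    | exact absurd rfl huv
    | exact csne1 rv hrv
    | exact (csne1 rv hrv).symm
    | exact csne2 rv hrv
    | exact (csne2 rv hrv).symm
    | exact csne3 rv hrv
    | exact (csne3 rv hrv).symm
    | exact csne4 rv hrv j'
    | exact (csne4 rv hrv j).symm
    | exact csne5 rv hrv
    | exact (csne5 rv hrv).symm
    | exact csne6 rv hrv
    | exact (csne6 rv hrv).symm
    | exact csne7 rv hrv j'
    | exact (csne7 rv hrv j).symm
    | exact csne8 rv hrv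
    | exact (csne8 rv hrv).symm
    | exact csne9 rv hrv j'
    | exact (csne9 rv hrv j).symm
    | exact csne10 rv hrv j'
    | exact (csne10 rv hrv j).symm
    | exact csne11 rv (fun h => huv (by rw [h]))


omit hrv in
lemma vdec_lower (c : Sym2 (QVert 0 1 1 rv) → Fin k)
    (hc : IsVDEC (QGraph 0 1 1 rv) k c) : rv 0 + 2 ≤ k := by
  obtain ⟨hp, hd⟩ := hc
  have hA : ∀ i i' : Fin (rv 0), i ≠ i' →
      c s(t1 rv, tl rv i) ≠ c s(t1 rv, tl rv i') :=
    fun i i' hne => hp (adj_t1_tl rv i) (adj_t1_tl rv i') (fun h => hne (tl_inj rv h))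
  have hB : ∀ i : Fin (rv 0), c s(t1 rv, tl rv i) ≠ c s(s1 rv, s1' rv) := by
    intro i heq
    apply hd (tl rv i) (s1' rv) (fun h => (s1'_ne_tl rv i) h.symm)
    show cset rv c (tl rv i) = cset rv c (s1' rv)
    rw [cset_tl, cset_s1']
    have e1 : c s(tl rv i, t1 rv) = c s(t1 rv, tl rv i) := by rw [Sym2.eq_swap]
    have e2 : c s(s1' rv, s1 rv) = c s(s1 rv, s1' rv) := by rw [Sym2.eq_swap]
    rw [e1, e2, heq]
  have hC : ∀ i : Fin (rv 0), c s(t1 rv, w0 rv) ≠ c s(t1 rv, tl rv i) :=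
    fun i => hp (adj_w0_t1 rv).symm (adj_t1_tl rv i) (w0_ne_tl rv i)
  set g : Fin (rv 0 + 1) → Fin k := fun i =>
    if h : (i : ℕ) < rv 0 then c s(t1 rv, tl rv ⟨i, h⟩) else c s(s1 rv, s1' rv) with hg
  have ginj : Function.Injective g := by
    intro a b hab
    simp only [hg] at hab
    by_cases ha : (a : ℕ) < rv 0
    · by_cases hb : (b : ℕ) < rv 0
      · rw [dif_pos ha, dif_pos hb] at hab
        by_contra hne
        exact hA ⟨a, ha⟩ ⟨b, hb⟩
          (fun h => hne (Fin.ext (by simpa using congrArg Fin.val h))) hab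
      · rw [dif_pos ha, dif_neg hb] at hab
        exact absurd hab (hB ⟨a, ha⟩)
    · by_cases hb : (b : ℕ) < rv 0
      · rw [dif_neg ha, dif_pos hb] at hab
        exact absurd hab.symm (hB ⟨b, hb⟩)
      · have h1 := a.isLt
        have h2 := b.isLt
        exact Fin.ext (by omega)
  have hk1 : rv 0 + 1 ≤ k := by
    have := Fintype.card_le_of_injective g ginj
    simpa using this
  by_contra hlt
  have hk : k = rv 0 + 1 := by omega
  subst hk
  have gbij : Function.Bijective g :=
    (Fintype.bijective_iff_injective_and_card g).mpr ⟨ginj, by simp⟩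
  obtain ⟨i, hi⟩ := gbij.2 (c s(t1 rv, w0 rv))
  simp only [hg] at hi
  by_cases hilt : (i : ℕ) < rv 0
  · rw [dif_pos hilt] at hi
    exact hC ⟨i, hilt⟩ hi.symm
  · rw [dif_neg hilt] at hi
    apply hd (w0 rv) (s1 rv) (ne1 rv)
    show cset rv c (w0 rv) = cset rv c (s1 rv)
    rw [cset_w0, cset_s1]
    have e1 : c s(w0 rv, s1 rv) = c s(s1 rv, w0 rv) := by rw [Sym2.eq_swap]
    have e2 : c s(w0 rv, t1 rv) = c s(t1 rv, w0 rv) := by rw [Sym2.eq_swap]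
    rw [e1, e2, ← hi]

end Aux

/-- For `Q = Q(0,1,1)` (center `w₀` adjacent to `s₁`, which has one leaf
neighbor `s'₁`, and to `t₁`, which has `r₁ ≥ 2` leaf neighbors),
`χ'ₛ(Q) = n₁(Q) + 1 = r₁ + 2`. -/



theorem vdecNum_QGraph_011 (rv : Fin 1 → ℕ) (hrv : 2 ≤ rv 0) :
    vdecNum (QGraph 0 1 1 rv) = numDeg (QGraph 0 1 1 rv) 1 + 1 ∧
    numDeg (QGraph 0 1 1 rv) 1 + 1 = rv 0 + 2 := by
  have h2 : numDeg (QGraph 0 1 1 rv) 1 = rv 0 + 1 := Aux.numDeg_one rv (by omega)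
  refine ⟨?_, by rw [h2]⟩
  rw [h2]
  unfold vdecNum
  have hmem : (rv 0 + 2) ∈
      {k : ℕ | ∃ c : Sym2 (QVert 0 1 1 rv) → Fin k, IsVDEC (QGraph 0 1 1 rv) k c} :=
    ⟨Aux.ccol rv, Aux.ccol_vdec rv hrv⟩
  refine le_antisymm (Nat.sInf_le hmem) (le_csInf ⟨_, hmem⟩ ?_)
  rintro k ⟨c, hc⟩
  exact Aux.vdec_lower rv c hc
end

section
/- Let Q = Q(r,m,n) be a tree of diameter four with n ≥ 1 and (r,m,n) ≠ (0,1,1). Then χ'_s(Q) = n_1(Q) = r + m + Σ_{i=1}^{n} r_i. -/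
open SimpleGraph

variable {V : Type*}

namespace QAux
variable {r m n : ℕ} {rv : Fin n → ℕ}

@[simp] lemma fin_val_mk {k a : ℕ} (h : a < k) : ((⟨a, h⟩ : Fin k) : ℕ) = a := rfl

abbrev qw0 : QVert r m n rv := Sum.inl ()
abbrev qw (i : Fin r) : QVert r m n rv := Sum.inr (Sum.inl i)
abbrev qs (i : Fin m) (b : Fin 2) : QVert r m n rv := Sum.inr (Sum.inr (Sum.inl (i, b)))
abbrev qt (i : Fin n) : QVert r m n rv := Sum.inr (Sum.inr (Sum.inr (Sum.inl i)))
abbrev ql (i : Fin n) (j : Fin (rv i)) : QVert r m n rv :=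
  Sum.inr (Sum.inr (Sum.inr (Sum.inr ⟨i, j⟩)))

lemma adj_w0 (x : QVert r m n rv) :
    (QGraph r m n rv).Adj qw0 x ↔
      (∃ i, x = qw i) ∨ (∃ i, x = qs i 0) ∨ (∃ i, x = qt i) := by
  simp only [QGraph, fromRel_adj, qw0, qw, qs, qt]; aesop

lemma adj_qw (i : Fin r) (x : QVert r m n rv) :
    (QGraph r m n rv).Adj (qw i) x ↔ x = qw0 := by
  simp only [QGraph, fromRel_adj, qw0, qw]; aesop

lemma adj_qs0 (i : Fin m) (x : QVert r m n rv) :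
    (QGraph r m n rv).Adj (qs i 0) x ↔ x = qw0 ∨ x = qs i 1 := by
  simp only [QGraph, fromRel_adj, qw0, qs]; aesop

lemma adj_qs1 (i : Fin m) (x : QVert r m n rv) :
    (QGraph r m n rv).Adj (qs i 1) x ↔ x = qs i 0 := by
  simp only [QGraph, fromRel_adj, qs]; aesop

lemma adj_qt (i : Fin n) (x : QVert r m n rv) :
    (QGraph r m n rv).Adj (qt i) x ↔ x = qw0 ∨ ∃ j, x = ql i j := by
  simp only [QGraph, fromRel_adj, qw0, qt, ql]; aesop

lemma adj_ql (i : Fin n) (j : Fin (rv i)) (x : QVert r m n rv) :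
    (QGraph r m n rv).Adj (ql i j) x ↔ x = qt i := by
  simp only [QGraph, fromRel_adj, qt, ql]; aesop

/-- degree of a vertex as Nat.card of neighborSet -/
noncomputable def deg (v : QVert r m n rv) : ℕ := Nat.card ((QGraph r m n rv).neighborSet v)

lemma deg_qw (i : Fin r) : deg (r := r) (m := m) (rv := rv) (qw i) = 1 := by
  have : (QGraph r m n rv).neighborSet (qw i) = {qw0} := by
    ext x; rw [mem_neighborSet, adj_qw]; simp
  rw [deg, this, Nat.card_coe_set_eq, Set.ncard_singleton]

lemma deg_qs1 (i : Fin m) : deg (r := r) (m := m) (rv := rv) (qs i 1) = 1 := by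
  have : (QGraph r m n rv).neighborSet (qs i 1) = {qs i 0} := by
    ext x; rw [mem_neighborSet, adj_qs1]; simp
  rw [deg, this, Nat.card_coe_set_eq, Set.ncard_singleton]

lemma deg_ql (i : Fin n) (j : Fin (rv i)) : deg (r := r) (m := m) (rv := rv) (ql i j) = 1 := by
  have : (QGraph r m n rv).neighborSet (ql i j) = {qt i} := by
    ext x; rw [mem_neighborSet, adj_ql]; simp
  rw [deg, this, Nat.card_coe_set_eq, Set.ncard_singleton]

lemma deg_qs0 (i : Fin m) : deg (r := r) (m := m) (rv := rv) (qs i 0) = 2 := by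
  have : (QGraph r m n rv).neighborSet (qs i 0) = {qw0, qs i 1} := by
    ext x; rw [mem_neighborSet, adj_qs0]; simp
  rw [deg, this, Nat.card_coe_set_eq, Set.ncard_pair (by simp [qw0, qs])]

lemma ql_injective (i : Fin n) : Function.Injective (ql (r := r) (m := m) (rv := rv) i) := by
  intro a b h
  simp only [ql, Sum.inr.injEq] at h
  exact eq_of_heq (Sigma.mk.inj_iff.mp h).2

lemma deg_qt (i : Fin n) : deg (r := r) (m := m) (rv := rv) (qt i) = rv i + 1 := by
  have : (QGraph r m n rv).neighborSet (qt i) = insert qw0 (Set.range (ql i)) := by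
    ext x; rw [mem_neighborSet, adj_qt]; simp [eq_comm]
  rw [deg, this, Nat.card_coe_set_eq,
    Set.ncard_insert_of_notMem (by simp [qw0, ql, Set.range]),
    ← Nat.card_coe_set_eq, Nat.card_range_of_injective (ql_injective i)]
  simp

lemma deg_qw0_ne_one (h2 : 2 ≤ m + n) (hn : 1 ≤ n) : deg (r := r) (m := m) (rv := rv) (qw0) ≠ 1 := by
  -- two distinct neighbors
  have hmem : ∀ x, (QGraph r m n rv).Adj qw0 x → x ∈ (QGraph r m n rv).neighborSet qw0 :=
    fun x h => h
  intro h1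
  rw [deg, Nat.card_eq_one_iff_exists] at h1
  obtain ⟨⟨x, hx⟩, hall⟩ := h1
  rcases Nat.lt_or_ge m 1 with hm | hm
  · -- m = 0, so n ≥ 2 : qt 0 and qt 1 distinct neighbors
    have hn2 : 2 ≤ n := by omega
    have a1 : (QGraph r m n rv).Adj qw0 (qt ⟨0, by omega⟩) := by
      rw [adj_w0]; right; right; exact ⟨_, rfl⟩
    have a2 : (QGraph r m n rv).Adj qw0 (qt ⟨1, by omega⟩) := by
      rw [adj_w0]; right; right; exact ⟨_, rfl⟩
    have e1 := congrArg Subtype.val (hall ⟨_, a1⟩)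
    have e2 := congrArg Subtype.val (hall ⟨_, a2⟩)
    have : (qt ⟨0, by omega⟩ : QVert r m n rv) = qt ⟨1, by omega⟩ := by
      rw [show (qt ⟨0, by omega⟩ : QVert r m n rv) = _ from e1,
        show (qt ⟨1, by omega⟩ : QVert r m n rv) = _ from e2]
    simp [qt] at this
  · -- m ≥ 1 : qs 0 0 and qt 0
    have a1 : (QGraph r m n rv).Adj qw0 (qs ⟨0, by omega⟩ 0) := by
      rw [adj_w0]; right; left; exact ⟨_, rfl⟩
    have a2 : (QGraph r m n rv).Adj qw0 (qt ⟨0, by omega⟩) := by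
      rw [adj_w0]; right; right; exact ⟨_, rfl⟩
    have e1 := congrArg Subtype.val (hall ⟨_, a1⟩)
    have e2 := congrArg Subtype.val (hall ⟨_, a2⟩)
    have : (qs ⟨0, by omega⟩ 0 : QVert r m n rv) = qt ⟨0, by omega⟩ := by
      rw [show (qs ⟨0, by omega⟩ 0 : QVert r m n rv) = _ from e1,
        show (qt ⟨0, by omega⟩ : QVert r m n rv) = _ from e2]
    simp [qs, qt] at this

/-- the leaves -/
def leafEmb : (Fin r ⊕ Fin m ⊕ Σ i : Fin n, Fin (rv i)) → QVert r m n rv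
  | Sum.inl i => qw i
  | Sum.inr (Sum.inl i) => qs i 1
  | Sum.inr (Sum.inr ⟨i, j⟩) => ql i j

lemma leafEmb_injective : Function.Injective (leafEmb (r := r) (m := m) (n := n) (rv := rv)) := by
  intro a b h
  rcases a with i | i | ⟨i, j⟩ <;> rcases b with i' | i' | ⟨i', j'⟩ <;>
    simp_all [leafEmb, qw, qs, ql]

lemma deg_eq_one_iff (h2 : 2 ≤ m + n) (hn : 1 ≤ n) (hrv : ∀ i, 2 ≤ rv i) (v : QVert r m n rv) :
    deg v = 1 ↔ v ∈ Set.range (leafEmb (r := r) (m := m) (n := n) (rv := rv)) := by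
  constructor
  · intro h
    rcases v with _ | i | ⟨i, b⟩ | i | ⟨i, j⟩
    · exact absurd h (deg_qw0_ne_one h2 hn)
    · exact ⟨Sum.inl i, rfl⟩
    · fin_cases b
      · exact absurd h (by rw [show (Sum.inr (Sum.inr (Sum.inl (i, ⟨0, by omega⟩))) : QVert r m n rv) = qs i 0 from rfl, deg_qs0]; omega)
      · exact ⟨Sum.inr (Sum.inl i), rfl⟩
    · exact absurd h (by rw [show (Sum.inr (Sum.inr (Sum.inr (Sum.inl i))) : QVert r m n rv) = qt i from rfl, deg_qt]; have := hrv i; omega)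
    · exact ⟨Sum.inr (Sum.inr ⟨i, j⟩), rfl⟩
  · rintro ⟨x, rfl⟩
    rcases x with i | i | ⟨i, j⟩
    · exact deg_qw i
    · exact deg_qs1 i
    · exact deg_ql i j

lemma numDeg_one (h2 : 2 ≤ m + n) (hn : 1 ≤ n) (hrv : ∀ i, 2 ≤ rv i) :
    numDeg (QGraph r m n rv) 1 = r + m + ∑ i, rv i := by
  rw [numDeg]
  have : {v : QVert r m n rv // Nat.card ((QGraph r m n rv).neighborSet v) = 1} ≃
      Set.range (leafEmb (r := r) (m := m) (n := n) (rv := rv)) :=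
    Equiv.subtypeEquiv (Equiv.refl _) (fun v => by
      exact deg_eq_one_iff h2 hn hrv v)
  rw [Nat.card_congr this, Nat.card_range_of_injective leafEmb_injective,
    Nat.card_eq_fintype_card]
  simp [Fintype.card_sum, ← Nat.add_assoc]


def palette {k : ℕ} (G : SimpleGraph (QVert r m n rv)) (c : Sym2 (QVert r m n rv) → Fin k)
    (v : QVert r m n rv) : Set (Fin k) := {i | ∃ w, G.Adj v w ∧ c s(v, w) = i}

lemma palette_qw {k : ℕ} (c : Sym2 (QVert r m n rv) → Fin k) (i : Fin r) :
    palette (QGraph r m n rv) c (qw i) = {c s(qw i, qw0)} := by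
  ext j; simp only [palette, Set.mem_setOf_eq, Set.mem_singleton_iff, adj_qw]
  constructor
  · rintro ⟨w, rfl, h⟩; exact h.symm
  · intro h; exact ⟨qw0, rfl, h.symm⟩

lemma palette_qs1 {k : ℕ} (c : Sym2 (QVert r m n rv) → Fin k) (i : Fin m) :
    palette (QGraph r m n rv) c (qs i 1) = {c s(qs i 1, qs i 0)} := by
  ext j; simp only [palette, Set.mem_setOf_eq, Set.mem_singleton_iff, adj_qs1]
  constructor
  · rintro ⟨w, rfl, h⟩; exact h.symm
  · intro h; exact ⟨qs i 0, rfl, h.symm⟩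

lemma palette_ql {k : ℕ} (c : Sym2 (QVert r m n rv) → Fin k) (i : Fin n) (j : Fin (rv i)) :
    palette (QGraph r m n rv) c (ql i j) = {c s(ql i j, qt i)} := by
  ext x; simp only [palette, Set.mem_setOf_eq, Set.mem_singleton_iff, adj_ql]
  constructor
  · rintro ⟨w, rfl, h⟩; exact h.symm
  · intro h; exact ⟨qt i, rfl, h.symm⟩

/-- parent of each leaf -/
def leafParent : (Fin r ⊕ Fin m ⊕ Σ i : Fin n, Fin (rv i)) → QVert r m n rv
  | Sum.inl _ => qw0
  | Sum.inr (Sum.inl i) => qs i 0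
  | Sum.inr (Sum.inr ⟨i, _⟩) => qt i

lemma palette_leaf {k : ℕ} (c : Sym2 (QVert r m n rv) → Fin k)
    (x : Fin r ⊕ Fin m ⊕ Σ i : Fin n, Fin (rv i)) :
    palette (QGraph r m n rv) c (leafEmb x) = {c s(leafEmb x, leafParent x)} := by
  rcases x with i | i | ⟨i, j⟩
  · exact palette_qw c i
  · exact palette_qs1 c i
  · exact palette_ql c i j

lemma lower_bound {k : ℕ} (c : Sym2 (QVert r m n rv) → Fin k)
    (h : IsVDEC (QGraph r m n rv) k c) : r + m + ∑ i, rv i ≤ k := by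
  set F : (Fin r ⊕ Fin m ⊕ Σ i : Fin n, Fin (rv i)) → Fin k :=
    fun x => c s(leafEmb x, leafParent x) with hF
  have hFinj : Function.Injective F := by
    intro a b hab
    by_contra hne
    have hvne : leafEmb (r := r) (m := m) (n := n) (rv := rv) a ≠ leafEmb b :=
      fun hcon => hne (leafEmb_injective hcon)
    apply h.2 _ _ hvne
    show palette (QGraph r m n rv) c (leafEmb a) = palette (QGraph r m n rv) c (leafEmb b)
    rw [palette_leaf, palette_leaf]
    rw [show c s(leafEmb a, leafParent a) = F a from rfl,
      show c s(leafEmb b, leafParent b) = F b from rfl, hab]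
  calc r + m + ∑ i, rv i
      = Fintype.card (Fin r ⊕ Fin m ⊕ Σ i : Fin n, Fin (rv i)) := by
        simp [Fintype.card_sum, ← Nat.add_assoc]
    _ ≤ Fintype.card (Fin k) := Fintype.card_le_of_injective F hFinj
    _ = k := Fintype.card_fin k



/-- color type -/
abbrev QCol (r m n : ℕ) (rv : Fin n → ℕ) : Type := Fin r ⊕ Fin m ⊕ Σ i : Fin n, Fin (rv i)

abbrev cwc (i : Fin r) : QCol r m n rv := Sum.inl i
abbrev csc (i : Fin m) : QCol r m n rv := Sum.inr (Sum.inl i)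
abbrev ctc (i : Fin n) (j : Fin (rv i)) : QCol r m n rv := Sum.inr (Sum.inr ⟨i, j⟩)

@[simp] lemma ctc_eq_iff {i j : Fin n} {x : Fin (rv i)} {y : Fin (rv j)} :
    ctc (r := r) (m := m) i x = ctc (r := r) (m := m) j y ↔
      (i : ℕ) = (j : ℕ) ∧ (x : ℕ) = (y : ℕ) := by
  constructor
  · intro h
    simp only [ctc, Sum.inr.injEq] at h
    obtain ⟨h1, h2⟩ := Sigma.mk.inj_iff.mp h
    subst h1
    exact ⟨rfl, congrArg Fin.val (eq_of_heq h2)⟩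
  · rintro ⟨h1, h2⟩
    have hij : i = j := Fin.ext h1
    subst hij
    have : x = y := Fin.ext h2
    subst this
    rfl

@[simp] lemma csc_eq_iff {i j : Fin m} :
    csc (r := r) (n := n) (rv := rv) i = csc j ↔ (i : ℕ) = (j : ℕ) := by
  simp [csc, Fin.ext_iff]

@[simp] lemma cwc_eq_iff {i j : Fin r} :
    cwc (m := m) (n := n) (rv := rv) i = cwc j ↔ (i : ℕ) = (j : ℕ) := by
  simp [cwc, Fin.ext_iff]

@[simp] lemma csc_ne_ctc {i : Fin m} {j : Fin n} {x : Fin (rv j)} :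
    csc (r := r) i ≠ ctc (r := r) (m := m) j x := by simp [csc, ctc]

@[simp] lemma ctc_ne_csc {i : Fin m} {j : Fin n} {x : Fin (rv j)} :
    ctc (r := r) (m := m) j x ≠ csc (r := r) i := by simp [csc, ctc]

@[simp] lemma cwc_ne_csc {i : Fin r} {j : Fin m} :
    cwc (n := n) (rv := rv) i ≠ csc j := by simp [csc, cwc]

@[simp] lemma cwc_ne_ctc {i : Fin r} {j : Fin n} {x : Fin (rv j)} :
    cwc (m := m) i ≠ ctc (r := r) (m := m) j x := by simp [cwc, ctc]

@[simp] lemma csc_ne_cwc {i : Fin r} {j : Fin m} :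
    csc (r := r) (n := n) (rv := rv) j ≠ cwc i := by simp [csc, cwc]

@[simp] lemma ctc_ne_cwc {i : Fin r} {j : Fin n} {x : Fin (rv j)} :
    ctc (r := r) (m := m) j x ≠ cwc i := by simp [cwc, ctc]


variable (hn : 0 < n) (hrv : ∀ i, 2 ≤ rv i)

/-- color on the edge w0–sᵢ -/
def sigC (i : Fin m) : QCol r m n rv :=
  if h : (i : ℕ) + 1 < m then csc ⟨(i : ℕ) + 1, h⟩
  else ctc ⟨n - 1, by omega⟩ ⟨1, by have := hrv ⟨n - 1, by omega⟩; omega⟩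

/-- color on the edge w0–tᵢ -/
def tauC (i : Fin n) : QCol r m n rv :=
  if hm : m = 0 then
    (if h : (i : ℕ) + 1 < n then ctc ⟨(i : ℕ) + 1, h⟩ ⟨0, by have := hrv ⟨(i:ℕ)+1, h⟩; omega⟩
     else ctc ⟨0, hn⟩ ⟨0, by have := hrv ⟨0, hn⟩; omega⟩)
  else if h0 : (i : ℕ) = 0 then csc ⟨0, by omega⟩
  else ctc ⟨(i : ℕ) - 1, by omega⟩ ⟨0, by have := hrv ⟨(i:ℕ)-1, by omega⟩; omega⟩

lemma sigC_injective :
    Function.Injective (sigC (r := r) (m := m) (n := n) (rv := rv) hn hrv) := by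
  intro a b h
  unfold sigC at h
  split_ifs at h with h1 h2 h2 <;>
    simp only [csc_eq_iff, ctc_eq_iff, csc_ne_ctc, ctc_ne_csc, Fin.val_mk] at h <;>
    exact Fin.ext (by omega)

lemma tauC_injective :
    Function.Injective (tauC (r := r) (m := m) (n := n) (rv := rv) hn hrv) := by
  intro a b h
  unfold tauC at h
  split_ifs at h with hm h1 h2 h2 h1 h2 h2 <;>
    simp only [csc_eq_iff, ctc_eq_iff, csc_ne_ctc, ctc_ne_csc, Fin.val_mk] at h <;>
    exact Fin.ext (by omega)

lemma sigC_ne_tauC (i : Fin m) (j : Fin n) :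
    sigC (r := r) hn hrv i ≠ tauC (r := r) hn hrv j := by
  have hm : m ≠ 0 := by have := i.2; omega
  unfold sigC tauC
  rw [dif_neg hm]
  split_ifs with h1 h2 h2 <;>
    simp only [ne_eq, csc_eq_iff, ctc_eq_iff, csc_ne_ctc, ctc_ne_csc, Fin.val_mk,
      not_and, not_false_iff] <;>
    omega

lemma sigC_ne_csc (i : Fin m) : sigC (r := r) (n := n) (rv := rv) hn hrv i ≠ csc i := by
  unfold sigC
  split_ifs with h1 <;>
    simp only [ne_eq, csc_eq_iff, ctc_ne_csc, Fin.val_mk, not_false_iff] <;>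
    omega

lemma tauC_ne_ctc (hB : m = 0 → 2 ≤ n) (i : Fin n) (x : Fin (rv i)) :
    tauC (r := r) (m := m) hn hrv i ≠ ctc (r := r) (m := m) i x := by
  unfold tauC
  split_ifs with hm h1 h2 <;>
    simp only [ne_eq, ctc_eq_iff, csc_ne_ctc, Fin.val_mk, not_and, not_false_iff]
  · omega
  · intro h; have := hB hm; omega
  · omega

/-- if σ i is a cs-color, its index is i+1 -/
lemma sigC_eq_csc_iff (i : Fin m) (x : Fin m) :
    sigC (r := r) (n := n) (rv := rv) hn hrv i = csc x ↔ (x : ℕ) = (i : ℕ) + 1 := by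
  unfold sigC
  split_ifs with h1 <;>
    simp only [csc_eq_iff, ctc_ne_csc, Fin.val_mk, false_iff] <;>
    omega


variable (hn : 0 < n) (hrv : ∀ i, 2 ≤ rv i)

def gaux : QVert r m n rv → QVert r m n rv → Option (QCol r m n rv)
  | Sum.inl _, Sum.inr (Sum.inl i) => some (cwc i)
  | Sum.inl _, Sum.inr (Sum.inr (Sum.inl (i, _))) => some (sigC hn hrv i)
  | Sum.inl _, Sum.inr (Sum.inr (Sum.inr (Sum.inl i))) => some (tauC hn hrv i)
  | Sum.inr (Sum.inr (Sum.inl (i, _))), Sum.inr (Sum.inr (Sum.inl (j, _))) =>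
      some (csc (min i j))
  | Sum.inr (Sum.inr (Sum.inr (Sum.inl _))), Sum.inr (Sum.inr (Sum.inr (Sum.inr p))) =>
      some (ctc p.1 p.2)
  | _, _ => none

def gcol (a b : QVert r m n rv) : QCol r m n rv :=
  (gaux hn hrv a b).getD ((gaux hn hrv b a).getD
    (ctc ⟨0, hn⟩ ⟨0, by have := hrv ⟨0, hn⟩; omega⟩))

lemma gcol_symm (a b : QVert r m n rv) : gcol hn hrv a b = gcol hn hrv b a := by
  rcases a with _ | i | ⟨i, bi⟩ | i | ⟨i, j⟩ <;>
    rcases b with _ | i' | ⟨i', bi'⟩ | i' | ⟨i', j'⟩ <;>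
    simp [gcol, gaux, min_comm]

@[simp] lemma gcol_w0_qw (i : Fin r) :
    gcol (m := m) (rv := rv) hn hrv qw0 (qw i) = cwc i := rfl

@[simp] lemma gcol_w0_qs (i : Fin m) (b : Fin 2) :
    gcol (r := r) (rv := rv) hn hrv qw0 (qs i b) = sigC hn hrv i := rfl

@[simp] lemma gcol_w0_qt (i : Fin n) :
    gcol (r := r) (m := m) (rv := rv) hn hrv qw0 (qt i) = tauC hn hrv i := rfl

@[simp] lemma gcol_qs_qs (i : Fin m) (b b' : Fin 2) :
    gcol (r := r) (rv := rv) hn hrv (qs i b) (qs i b') = csc i := by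
  simp [gcol, gaux, qs, min_self]

@[simp] lemma gcol_qt_ql (i : Fin n) (x : Fin (rv i)) :
    gcol (r := r) (m := m) hn hrv (qt i) (ql i x) = ctc i x := rfl

@[simp] lemma gcol_qw_w0 (i : Fin r) :
    gcol (m := m) (rv := rv) hn hrv (qw i) qw0 = cwc i := rfl

@[simp] lemma gcol_qs_w0 (i : Fin m) (b : Fin 2) :
    gcol (r := r) (rv := rv) hn hrv (qs i b) qw0 = sigC hn hrv i := rfl

@[simp] lemma gcol_qt_w0 (i : Fin n) :
    gcol (r := r) (m := m) (rv := rv) hn hrv (qt i) qw0 = tauC hn hrv i := rfl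

@[simp] lemma gcol_ql_qt (i : Fin n) (x : Fin (rv i)) :
    gcol (r := r) (m := m) hn hrv (ql i x) (qt i) = ctc i x := rfl


-- CHUNK: gPal and properness
lemma vert_cases (v : QVert r m n rv) :
    v = qw0 ∨ (∃ i, v = qw i) ∨ (∃ i b, v = qs i b) ∨ (∃ i, v = qt i) ∨ (∃ i j, v = ql i j) := by
  rcases v with v0 | i | ⟨i, b⟩ | i | ⟨i, j⟩
  · exact Or.inl rfl
  · exact Or.inr (Or.inl ⟨i, rfl⟩)
  · exact Or.inr (Or.inr (Or.inl ⟨i, b, rfl⟩))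
  · exact Or.inr (Or.inr (Or.inr (Or.inl ⟨i, rfl⟩)))
  · exact Or.inr (Or.inr (Or.inr (Or.inr ⟨i, j, rfl⟩)))

lemma fin2_cases (b : Fin 2) : b = 0 ∨ b = 1 := by
  fin_cases b
  · exact Or.inl rfl
  · exact Or.inr rfl

/-- proper edge coloring property of gcol -/
lemma gcol_proper (hB : m = 0 → 2 ≤ n) :
    ∀ ⦃u v w : QVert r m n rv⦄, (QGraph r m n rv).Adj u v → (QGraph r m n rv).Adj u w →
      v ≠ w → gcol hn hrv u v ≠ gcol hn hrv u w := by
  intro u v w h1 h2 hvw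
  rcases vert_cases u with rfl | ⟨i, rfl⟩ | ⟨i, b, rfl⟩ | ⟨i, rfl⟩ | ⟨i, j, rfl⟩
  · -- u = qw0
    have h1' := (adj_w0 v).mp h1
    have h2' := (adj_w0 w).mp h2
    rcases h1' with ⟨a, rfl⟩ | ⟨a, rfl⟩ | ⟨a, rfl⟩ <;>
      rcases h2' with ⟨a', rfl⟩ | ⟨a', rfl⟩ | ⟨a', rfl⟩ <;>
      simp only [gcol_w0_qw, gcol_w0_qs, gcol_w0_qt]
    · have : a ≠ a' := fun h => hvw (by rw [h])
      simp only [ne_eq, cwc_eq_iff]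
      exact fun h => this (Fin.ext h)
    · exact fun h => (by unfold sigC at h; split_ifs at h <;> simp_all)
    · exact fun h => (by unfold tauC at h; split_ifs at h <;> simp_all)
    · exact fun h => (by unfold sigC at h; split_ifs at h <;> simp_all)
    · have : a ≠ a' := fun h => hvw (by rw [h])
      exact fun h => this (sigC_injective hn hrv h)
    · exact sigC_ne_tauC hn hrv a a'
    · exact fun h => (by unfold tauC at h; split_ifs at h <;> simp_all)
    · exact fun h => (sigC_ne_tauC hn hrv a' a) h.symm
    · have : a ≠ a' := fun h => hvw (by rw [h])
      exact fun h => this (tauC_injective hn hrv h)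
  · -- u = qw i : unique neighbor
    have e1 := (adj_qw i v).mp h1
    have e2 := (adj_qw i w).mp h2
    exact absurd (e1.trans e2.symm) hvw
  · -- u = qs i b
    rcases fin2_cases b with rfl | rfl
    · have e1 := (adj_qs0 i v).mp h1
      have e2 := (adj_qs0 i w).mp h2
      rcases e1 with rfl | rfl <;> rcases e2 with rfl | rfl
      · exact absurd rfl hvw
      · simp only [gcol_qs_w0, gcol_qs_qs]
        exact sigC_ne_csc hn hrv i
      · simp only [gcol_qs_w0, gcol_qs_qs]
        exact fun h => (sigC_ne_csc hn hrv i) h.symm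
      · exact absurd rfl hvw
    · have e1 := (adj_qs1 i v).mp h1
      have e2 := (adj_qs1 i w).mp h2
      exact absurd (e1.trans e2.symm) hvw
  · -- u = qt i
    have e1 := (adj_qt i v).mp h1
    have e2 := (adj_qt i w).mp h2
    rcases e1 with rfl | ⟨x, rfl⟩ <;> rcases e2 with rfl | ⟨y, rfl⟩
    · exact absurd rfl hvw
    · simp only [gcol_qt_w0, gcol_qt_ql]
      exact tauC_ne_ctc hn hrv hB i y
    · simp only [gcol_qt_w0, gcol_qt_ql]
      exact fun h => (tauC_ne_ctc hn hrv hB i x) h.symm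
    · simp only [gcol_qt_ql]
      have hxy : x ≠ y := fun h => hvw (by rw [h])
      rw [ne_eq, ctc_eq_iff]
      exact fun h => hxy (Fin.ext h.2)
  · -- u = ql i j : unique neighbor
    have e1 := (adj_ql i j v).mp h1
    have e2 := (adj_ql i j w).mp h2
    exact absurd (e1.trans e2.symm) hvw

/-- palette of gcol at a vertex -/
def gPal (v : QVert r m n rv) : Set (QCol r m n rv) :=
  {x | ∃ w, (QGraph r m n rv).Adj v w ∧ gcol hn hrv v w = x}

lemma gPal_qw (i : Fin r) : gPal (m := m) hn hrv (qw i) = {cwc i} := by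
  ext x
  simp only [gPal, Set.mem_setOf_eq, Set.mem_singleton_iff]
  constructor
  · rintro ⟨w, hw, rfl⟩
    rw [(adj_qw i w).mp hw, gcol_qw_w0]
  · rintro rfl
    exact ⟨qw0, (adj_qw i qw0).mpr rfl, gcol_qw_w0 hn hrv i⟩

lemma gPal_qs1 (i : Fin m) : gPal (r := r) hn hrv (qs i 1) = {csc i} := by
  ext x
  simp only [gPal, Set.mem_setOf_eq, Set.mem_singleton_iff]
  constructor
  · rintro ⟨w, hw, rfl⟩
    rw [(adj_qs1 i w).mp hw, gcol_qs_qs]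
  · rintro rfl
    exact ⟨qs i 0, (adj_qs1 i _).mpr rfl, gcol_qs_qs hn hrv i 1 0⟩

lemma gPal_ql (i : Fin n) (j : Fin (rv i)) : gPal (r := r) (m := m) hn hrv (ql i j) = {ctc i j} := by
  ext x
  simp only [gPal, Set.mem_setOf_eq, Set.mem_singleton_iff]
  constructor
  · rintro ⟨w, hw, rfl⟩
    rw [(adj_ql i j w).mp hw, gcol_ql_qt]
  · rintro rfl
    exact ⟨qt i, (adj_ql i j _).mpr rfl, gcol_ql_qt hn hrv i j⟩

lemma gPal_qs0 (i : Fin m) : gPal (r := r) hn hrv (qs i 0) = {sigC (r := r) hn hrv i, csc i} := by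
  ext x
  simp only [gPal, Set.mem_setOf_eq, Set.mem_insert_iff, Set.mem_singleton_iff]
  constructor
  · rintro ⟨w, hw, rfl⟩
    rcases (adj_qs0 i w).mp hw with rfl | rfl
    · exact Or.inl (gcol_qs_w0 hn hrv i 0)
    · exact Or.inr (gcol_qs_qs hn hrv i 0 1)
  · rintro (rfl | rfl)
    · exact ⟨qw0, (adj_qs0 i _).mpr (Or.inl rfl), gcol_qs_w0 hn hrv i 0⟩
    · exact ⟨qs i 1, (adj_qs0 i _).mpr (Or.inr rfl), gcol_qs_qs hn hrv i 0 1⟩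

lemma gPal_qt (i : Fin n) :
    gPal hn hrv (qt i) = insert (tauC hn hrv i) (Set.range (ctc (r := r) (m := m) i)) := by
  ext x
  simp only [gPal, Set.mem_setOf_eq, Set.mem_insert_iff, Set.mem_range]
  constructor
  · rintro ⟨w, hw, rfl⟩
    rcases (adj_qt i w).mp hw with rfl | ⟨y, rfl⟩
    · exact Or.inl (gcol_qt_w0 hn hrv i)
    · exact Or.inr ⟨y, (gcol_qt_ql hn hrv i y).symm⟩
  · rintro (rfl | ⟨y, rfl⟩)
    · exact ⟨qw0, (adj_qt i _).mpr (Or.inl rfl), gcol_qt_w0 hn hrv i⟩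
    · exact ⟨ql i y, (adj_qt i _).mpr (Or.inr ⟨y, rfl⟩), gcol_qt_ql hn hrv i y⟩

lemma gPal_qw0 :
    gPal (r := r) (m := m) hn hrv qw0 =
      Set.range cwc ∪ Set.range (sigC hn hrv) ∪ Set.range (tauC hn hrv) := by
  ext x
  simp only [gPal, Set.mem_setOf_eq, Set.mem_union, Set.mem_range]
  constructor
  · rintro ⟨w, hw, rfl⟩
    rcases (adj_w0 w).mp hw with ⟨a, rfl⟩ | ⟨a, rfl⟩ | ⟨a, rfl⟩
    · exact Or.inl (Or.inl ⟨a, (gcol_w0_qw hn hrv a).symm⟩)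
    · exact Or.inl (Or.inr ⟨a, (gcol_w0_qs hn hrv a 0).symm⟩)
    · exact Or.inr ⟨a, (gcol_w0_qt hn hrv a).symm⟩
  · rintro ((⟨a, rfl⟩ | ⟨a, rfl⟩) | ⟨a, rfl⟩)
    · exact ⟨qw a, (adj_w0 _).mpr (Or.inl ⟨a, rfl⟩), gcol_w0_qw hn hrv a⟩
    · exact ⟨qs a 0, (adj_w0 _).mpr (Or.inr (Or.inl ⟨a, rfl⟩)), gcol_w0_qs hn hrv a 0⟩
    · exact ⟨qt a, (adj_w0 _).mpr (Or.inr (Or.inr ⟨a, rfl⟩)), gcol_w0_qt hn hrv a⟩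


-- CHUNK: palette distinctness
lemma cwc_ne_sigC (i : Fin r) (j : Fin m) :
    cwc (m := m) (n := n) (rv := rv) i ≠ sigC hn hrv j := by
  unfold sigC; split_ifs <;> simp

lemma cwc_ne_tauC (i : Fin r) (j : Fin n) :
    cwc (m := m) (n := n) (rv := rv) i ≠ tauC hn hrv j := by
  unfold tauC; split_ifs <;> simp

lemma set_ne_of_two_mem {α : Type*} {S : Set α} {x y a : α}
    (hx : x ∈ S) (hy : y ∈ S) (hxy : x ≠ y) : S ≠ {a} := by
  intro h
  rw [h, Set.mem_singleton_iff] at hx hy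
  exact hxy (hx.trans hy.symm)

lemma pair_not_three {α : Type*} {x y z a b : α}
    (hxy : x ≠ y) (hxz : x ≠ z) (hyz : y ≠ z)
    (hx : x = a ∨ x = b) (hy : y = a ∨ y = b) (hz : z = a ∨ z = b) : False := by
  rcases hx with rfl | rfl <;> rcases hy with rfl | rfl <;> rcases hz with rfl | rfl <;>
    simp_all

/-- two distinct elements of the center palette -/
lemma qw0_two_mem (hB : m = 0 → 2 ≤ n) :
    ∃ x y, x ∈ gPal (r := r) (m := m) hn hrv qw0 ∧ y ∈ gPal (r := r) (m := m) hn hrv qw0 ∧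
      x ≠ y := by
  by_cases hm : m = 0
  · have h2 : 2 ≤ n := hB hm
    refine ⟨tauC hn hrv ⟨0, hn⟩, tauC hn hrv ⟨1, by omega⟩, ?_, ?_, ?_⟩
    · rw [gPal_qw0]; exact Or.inr ⟨_, rfl⟩
    · rw [gPal_qw0]; exact Or.inr ⟨_, rfl⟩
    · intro h
      have := tauC_injective hn hrv h
      simp [Fin.ext_iff] at this
  · refine ⟨sigC hn hrv ⟨0, by omega⟩, tauC hn hrv ⟨0, hn⟩, ?_, ?_, ?_⟩
    · rw [gPal_qw0]; exact Or.inl (Or.inr ⟨_, rfl⟩)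
    · rw [gPal_qw0]; exact Or.inr ⟨_, rfl⟩
    · exact sigC_ne_tauC hn hrv _ _

/-- three distinct elements of the center palette when m ≥ 1 -/
lemma qw0_three_mem (hm : 0 < m) (h3 : 3 ≤ r + m + n) :
    ∃ x y z, x ∈ gPal (r := r) (m := m) hn hrv qw0 ∧ y ∈ gPal (r := r) (m := m) hn hrv qw0 ∧
      z ∈ gPal (r := r) (m := m) hn hrv qw0 ∧ x ≠ y ∧ x ≠ z ∧ y ≠ z := by
  rcases Nat.lt_or_ge 0 r with hr | hr
  · refine ⟨cwc ⟨0, hr⟩, sigC hn hrv ⟨0, hm⟩, tauC hn hrv ⟨0, hn⟩, ?_, ?_, ?_, ?_, ?_, ?_⟩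
    · rw [gPal_qw0]; exact Or.inl (Or.inl ⟨_, rfl⟩)
    · rw [gPal_qw0]; exact Or.inl (Or.inr ⟨_, rfl⟩)
    · rw [gPal_qw0]; exact Or.inr ⟨_, rfl⟩
    · exact cwc_ne_sigC hn hrv _ _
    · exact cwc_ne_tauC hn hrv _ _
    · exact sigC_ne_tauC hn hrv _ _
  · rcases Nat.lt_or_ge 1 m with hm2 | hm2
    · refine ⟨sigC hn hrv ⟨0, hm⟩, sigC hn hrv ⟨1, hm2⟩, tauC hn hrv ⟨0, hn⟩, ?_, ?_, ?_, ?_, ?_, ?_⟩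
      · rw [gPal_qw0]; exact Or.inl (Or.inr ⟨_, rfl⟩)
      · rw [gPal_qw0]; exact Or.inl (Or.inr ⟨_, rfl⟩)
      · rw [gPal_qw0]; exact Or.inr ⟨_, rfl⟩
      · intro h; have := sigC_injective hn hrv h; simp [Fin.ext_iff] at this
      · exact sigC_ne_tauC hn hrv _ _
      · exact sigC_ne_tauC hn hrv _ _
    · have hn2 : 2 ≤ n := by omega
      refine ⟨sigC hn hrv ⟨0, hm⟩, tauC hn hrv ⟨0, hn⟩, tauC hn hrv ⟨1, by omega⟩,
        ?_, ?_, ?_, ?_, ?_, ?_⟩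
      · rw [gPal_qw0]; exact Or.inl (Or.inr ⟨_, rfl⟩)
      · rw [gPal_qw0]; exact Or.inr ⟨_, rfl⟩
      · rw [gPal_qw0]; exact Or.inr ⟨_, rfl⟩
      · exact sigC_ne_tauC hn hrv _ _
      · exact sigC_ne_tauC hn hrv _ _
      · intro h; have := tauC_injective hn hrv h; simp [Fin.ext_iff] at this


-- CHUNK: hard pairwise palette lemmas
/-- ctc with distinct second indices differ -/
lemma ctc_val_ne {i : Fin n} {x y : Fin (rv i)} (h : (x : ℕ) ≠ (y : ℕ)) :
    ctc (r := r) (m := m) i x ≠ ctc i y := by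
  rw [ne_eq, ctc_eq_iff]; exact fun hc => h hc.2

lemma gPal_qt_ne_qw0 (hB : m = 0 → 2 ≤ n) (i : Fin n) :
    gPal (r := r) (m := m) hn hrv (qt i) ≠ gPal hn hrv qw0 := by
  intro heq
  by_cases hm : m = 0
  · -- witness ctc i 1
    have hx : ctc (r := r) (m := m) i ⟨1, by have := hrv i; omega⟩ ∈ gPal hn hrv (qt i) := by
      rw [gPal_qt]; exact Or.inr ⟨_, rfl⟩
    rw [heq, gPal_qw0] at hx
    rcases hx with (⟨a, ha⟩ | ⟨a, ha⟩) | ⟨a, ha⟩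
    · exact cwc_ne_ctc ha
    · exact absurd a.2 (by omega)
    · revert ha
      unfold tauC
      rw [dif_pos hm]
      split_ifs <;> (rw [ctc_eq_iff]; simp)
  · by_cases hi : (i : ℕ) = n - 1
    · -- witness ctc i 0
      have hx : ctc (r := r) (m := m) i ⟨0, by have := hrv i; omega⟩ ∈ gPal hn hrv (qt i) := by
        rw [gPal_qt]; exact Or.inr ⟨_, rfl⟩
      rw [heq, gPal_qw0] at hx
      rcases hx with (⟨a, ha⟩ | ⟨a, ha⟩) | ⟨a, ha⟩
      · exact cwc_ne_ctc ha
      · revert ha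
        unfold sigC
        split_ifs
        · exact csc_ne_ctc
        · rw [ctc_eq_iff]; simp
      · revert ha
        unfold tauC
        rw [dif_neg hm]
        split_ifs with h0
        · exact csc_ne_ctc
        · rw [ctc_eq_iff]
          rintro ⟨hfst, -⟩
          have ha2 := a.2
          simp only [fin_val_mk] at hfst
          omega
    · -- witness ctc i 1
      have hx : ctc (r := r) (m := m) i ⟨1, by have := hrv i; omega⟩ ∈ gPal hn hrv (qt i) := by
        rw [gPal_qt]; exact Or.inr ⟨_, rfl⟩
      rw [heq, gPal_qw0] at hx
      rcases hx with (⟨a, ha⟩ | ⟨a, ha⟩) | ⟨a, ha⟩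
      · exact cwc_ne_ctc ha
      · revert ha
        unfold sigC
        split_ifs
        · exact csc_ne_ctc
        · rw [ctc_eq_iff]
          rintro ⟨hfst, -⟩
          simp only [fin_val_mk] at hfst
          omega
      · revert ha
        unfold tauC
        rw [dif_neg hm]
        split_ifs with h0
        · exact csc_ne_ctc
        · rw [ctc_eq_iff]; simp
  
lemma gPal_qs0_ne_qw0 (h3 : 0 < m → 3 ≤ r + m + n) (i : Fin m) :
    gPal (r := r) hn hrv (qs i 0) ≠ gPal hn hrv qw0 := by
  intro heq
  have hm : 0 < m := i.pos
  obtain ⟨x, y, z, hx, hy, hz, hxy, hxz, hyz⟩ := qw0_three_mem hn hrv hm (h3 hm)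
  rw [← heq, gPal_qs0] at hx hy hz
  exact pair_not_three hxy hxz hyz hx hy hz

lemma gPal_qs0_ne_qs0 (i i' : Fin m) (hii : i ≠ i') :
    gPal (r := r) hn hrv (qs i 0) ≠ gPal hn hrv (qs i' 0) := by
  intro heq
  have h1 : csc (r := r) (n := n) (rv := rv) i ∈ ({sigC hn hrv i', csc i'} : Set _) := by
    rw [← gPal_qs0, ← heq, gPal_qs0]; exact Or.inr rfl
  have h2 : csc (r := r) (n := n) (rv := rv) i' ∈ ({sigC hn hrv i, csc i} : Set _) := by
    rw [← gPal_qs0, heq, gPal_qs0]; exact Or.inr rfl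
  have hne : (i : ℕ) ≠ (i' : ℕ) := fun h => hii (Fin.ext h)
  simp only [Set.mem_insert_iff, Set.mem_singleton_iff] at h1 h2
  rcases h1 with h1 | h1
  · rcases h2 with h2 | h2
    · have e1 := (sigC_eq_csc_iff hn hrv i' i).mp h1.symm
      have e2 := (sigC_eq_csc_iff hn hrv i i').mp h2.symm
      omega
    · rw [csc_eq_iff] at h2; omega
  · rw [csc_eq_iff] at h1; omega

lemma gPal_qt_ne_qt (i i' : Fin n) (hii : i ≠ i') :
    gPal (r := r) (m := m) hn hrv (qt i) ≠ gPal hn hrv (qt i') := by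
  intro heq
  have hne : (i : ℕ) ≠ (i' : ℕ) := fun h => hii (Fin.ext h)
  have h0 : ctc (r := r) (m := m) i ⟨0, by have := hrv i; omega⟩ ∈
      insert (tauC hn hrv i') (Set.range (ctc (r := r) (m := m) i')) := by
    rw [← gPal_qt, ← heq, gPal_qt]; exact Or.inr ⟨_, rfl⟩
  have h1 : ctc (r := r) (m := m) i ⟨1, by have := hrv i; omega⟩ ∈
      insert (tauC hn hrv i') (Set.range (ctc (r := r) (m := m) i')) := by
    rw [← gPal_qt, ← heq, gPal_qt]; exact Or.inr ⟨_, rfl⟩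
  simp only [Set.mem_insert_iff, Set.mem_range] at h0 h1
  rcases h0 with h0 | ⟨y, hy⟩
  · rcases h1 with h1 | ⟨y, hy⟩
    · exact ctc_val_ne (by simp) (h0.trans h1.symm)
    · rw [ctc_eq_iff] at hy; omega
  · rw [ctc_eq_iff] at hy; omega

lemma gPal_qs0_ne_qt (i : Fin m) (i' : Fin n) :
    gPal (r := r) hn hrv (qs i 0) ≠ gPal hn hrv (qt i') := by
  intro heq
  have h0 : ctc (r := r) (m := m) i' ⟨0, by have := hrv i'; omega⟩ ∈
      ({sigC hn hrv i, csc i} : Set _) := by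
    rw [← gPal_qs0, heq, gPal_qt]; exact Or.inr ⟨_, rfl⟩
  have h1 : ctc (r := r) (m := m) i' ⟨1, by have := hrv i'; omega⟩ ∈
      ({sigC hn hrv i, csc i} : Set _) := by
    rw [← gPal_qs0, heq, gPal_qt]; exact Or.inr ⟨_, rfl⟩
  simp only [Set.mem_insert_iff, Set.mem_singleton_iff] at h0 h1
  rcases h0 with h0 | h0
  · rcases h1 with h1 | h1
    · exact ctc_val_ne (by simp) (h0.trans h1.symm)
    · exact ctc_ne_csc h1
  · exact ctc_ne_csc h0


-- CHUNK: master distinctness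
lemma gPal_ne (hB : m = 0 → 2 ≤ n) (h3 : 0 < m → 3 ≤ r + m + n) :
    ∀ u v : QVert r m n rv, u ≠ v → gPal hn hrv u ≠ gPal hn hrv v := by
  have t0 : ∀ i : Fin n, (⟨0, by have := hrv i; omega⟩ : Fin (rv i)) = ⟨0, by have := hrv i; omega⟩ := fun _ => rfl
  -- helper membership facts
  have qtmem : ∀ i : Fin n, ∀ x : Fin (rv i),
      ctc (r := r) (m := m) i x ∈ gPal hn hrv (qt i) := by
    intro i x; rw [gPal_qt]; exact Or.inr ⟨x, rfl⟩
  have qs0mem1 : ∀ i : Fin m, sigC (r := r) hn hrv i ∈ gPal (r := r) hn hrv (qs i 0) := by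
    intro i; rw [gPal_qs0]; exact Or.inl rfl
  have qs0mem2 : ∀ i : Fin m, csc (r := r) (n := n) (rv := rv) i ∈ gPal (r := r) hn hrv (qs i 0) := by
    intro i; rw [gPal_qs0]; exact Or.inr rfl
  have qttwo : ∀ (i : Fin n) (a : QCol r m n rv), gPal hn hrv (qt i) ≠ {a} := by
    intro i a
    exact set_ne_of_two_mem (qtmem i ⟨0, by have := hrv i; omega⟩)
      (qtmem i ⟨1, by have := hrv i; omega⟩) (ctc_val_ne (by simp))
  have qs0two : ∀ (i : Fin m) (a : QCol r m n rv), gPal (r := r) hn hrv (qs i 0) ≠ {a} := by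
    intro i a
    exact set_ne_of_two_mem (qs0mem1 i) (qs0mem2 i) (sigC_ne_csc hn hrv i)
  have qw0two : ∀ a : QCol r m n rv, gPal (r := r) (m := m) hn hrv qw0 ≠ {a} := by
    intro a
    obtain ⟨x, y, hx, hy, hxy⟩ := qw0_two_mem hn hrv hB
    exact set_ne_of_two_mem hx hy hxy
  intro u v huv
  rcases vert_cases u with rfl | ⟨i, rfl⟩ | ⟨i, b, rfl⟩ | ⟨i, rfl⟩ | ⟨i, j, rfl⟩ <;>
    [skip;
     skip;
     rcases fin2_cases b with rfl | rfl;
     skip;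
     skip] <;>
    rcases vert_cases v with rfl | ⟨i', rfl⟩ | ⟨i', b', rfl⟩ | ⟨i', rfl⟩ | ⟨i', j', rfl⟩ <;>
    [skip; skip; rcases fin2_cases b' with rfl | rfl; skip; skip;
     skip; skip; rcases fin2_cases b' with rfl | rfl; skip; skip;
     skip; skip; rcases fin2_cases b' with rfl | rfl; skip; skip;
     skip; skip; rcases fin2_cases b' with rfl | rfl; skip; skip;
     skip; skip; rcases fin2_cases b' with rfl | rfl; skip; skip;
     skip; skip; rcases fin2_cases b' with rfl | rfl; skip; skip]
  -- u = qw0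
  · exact absurd rfl huv
  · rw [gPal_qw]; exact qw0two _
  · exact (gPal_qs0_ne_qw0 hn hrv h3 i').symm
  · rw [gPal_qs1]; exact qw0two _
  · exact (gPal_qt_ne_qw0 hn hrv hB i').symm
  · rw [gPal_ql]; exact qw0two _
  -- u = qw i
  · rw [gPal_qw]; exact (qw0two _).symm
  · rw [gPal_qw, gPal_qw]
    intro h
    rw [Set.singleton_eq_singleton_iff, cwc_eq_iff] at h
    exact huv (by rw [Fin.ext h])
  · rw [gPal_qw]; exact (qs0two _ _).symm
  · rw [gPal_qw, gPal_qs1]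
    intro h
    rw [Set.singleton_eq_singleton_iff] at h
    exact cwc_ne_csc h
  · rw [gPal_qw]; exact (qttwo _ _).symm
  · rw [gPal_qw, gPal_ql]
    intro h
    rw [Set.singleton_eq_singleton_iff] at h
    exact cwc_ne_ctc h
  -- u = qs i 0
  · exact gPal_qs0_ne_qw0 hn hrv h3 i
  · rw [gPal_qw]; exact qs0two _ _
  · have hii : i ≠ i' := fun h => huv (by rw [h])
    exact gPal_qs0_ne_qs0 hn hrv i i' hii
  · rw [gPal_qs1]; exact qs0two _ _
  · exact gPal_qs0_ne_qt hn hrv i i'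
  · rw [gPal_ql]; exact qs0two _ _
  -- u = qs i 1
  · rw [gPal_qs1]; exact (qw0two _).symm
  · rw [gPal_qs1, gPal_qw]
    intro h
    rw [Set.singleton_eq_singleton_iff] at h
    exact csc_ne_cwc h
  · rw [gPal_qs1]; exact (qs0two _ _).symm
  · rw [gPal_qs1, gPal_qs1]
    intro h
    rw [Set.singleton_eq_singleton_iff, csc_eq_iff] at h
    exact huv (by rw [Fin.ext h])
  · rw [gPal_qs1]; exact (qttwo _ _).symm
  · rw [gPal_qs1, gPal_ql]
    intro h
    rw [Set.singleton_eq_singleton_iff] at h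
    exact csc_ne_ctc h
  -- u = qt i
  · exact gPal_qt_ne_qw0 hn hrv hB i
  · rw [gPal_qw]; exact qttwo _ _
  · exact (gPal_qs0_ne_qt hn hrv i' i).symm
  · rw [gPal_qs1]; exact qttwo _ _
  · have hii : i ≠ i' := fun h => huv (by rw [h])
    exact gPal_qt_ne_qt hn hrv i i' hii
  · rw [gPal_ql]; exact qttwo _ _
  -- u = ql i j
  · rw [gPal_ql]; exact (qw0two _).symm
  · rw [gPal_ql, gPal_qw]
    intro h
    rw [Set.singleton_eq_singleton_iff] at h
    exact ctc_ne_cwc h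
  · rw [gPal_ql]; exact (qs0two _ _).symm
  · rw [gPal_ql, gPal_qs1]
    intro h
    rw [Set.singleton_eq_singleton_iff] at h
    exact ctc_ne_csc h
  · rw [gPal_ql]; exact (qttwo _ _).symm
  · rw [gPal_ql, gPal_ql]
    intro h
    rw [Set.singleton_eq_singleton_iff, ctc_eq_iff] at h
    obtain ⟨h1, h2⟩ := h
    have hi : i = i' := Fin.ext h1
    subst hi
    have hj : j = j' := Fin.ext h2
    exact huv (by rw [hj])


-- CHUNK: final coloring and IsVDEC
noncomputable def eqvC : QCol r m n rv ≃ Fin (r + m + ∑ i, rv i) :=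
  Fintype.equivFinOfCardEq (by simp [Fintype.card_sum, Fintype.card_sigma, ← Nat.add_assoc])

noncomputable def cFin : Sym2 (QVert r m n rv) → Fin (r + m + ∑ i, rv i) :=
  fun e => eqvC (Sym2.lift ⟨gcol hn hrv, gcol_symm hn hrv⟩ e)

lemma cFin_mk (a b : QVert r m n rv) :
    cFin hn hrv s(a, b) = eqvC (gcol hn hrv a b) := rfl

lemma isVDEC_cFin (hB : m = 0 → 2 ≤ n) (h3 : 0 < m → 3 ≤ r + m + n) :
    IsVDEC (QGraph r m n rv) (r + m + ∑ i, rv i) (cFin hn hrv) := by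
  constructor
  · intro u v w h1 h2 hvw
    rw [cFin_mk, cFin_mk]
    intro h
    exact gcol_proper hn hrv hB h1 h2 hvw (eqvC.injective h)
  · intro u v huv
    have himg : ∀ x : QVert r m n rv,
        {i | ∃ w, (QGraph r m n rv).Adj x w ∧ cFin hn hrv s(x, w) = i} =
          eqvC '' gPal hn hrv x := by
      intro x
      ext y
      simp only [Set.mem_setOf_eq, Set.mem_image, gPal]
      constructor
      · rintro ⟨w, hw, rfl⟩
        exact ⟨gcol hn hrv x w, ⟨w, hw, rfl⟩, rfl⟩
      · rintro ⟨c, ⟨w, hw, rfl⟩, rfl⟩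
        exact ⟨w, hw, rfl⟩
    rw [himg, himg]
    intro h
    exact gPal_ne hn hrv hB h3 u v huv (Set.image_injective.mpr eqvC.injective h)

/-- distance bound when m = 0 and n = 1 -/
lemma dist_le_three (hm : m = 0) (hn1 : n = 1) :
    ∀ u v : QVert r m n rv, (QGraph r m n rv).dist u v ≤ 3 := by
  have adjw : ∀ i : Fin r, (QGraph r m n rv).Adj qw0 (qw i) :=
    fun i => (adj_w0 _).mpr (Or.inl ⟨i, rfl⟩)
  have adjt : ∀ i : Fin n, (QGraph r m n rv).Adj qw0 (qt i) :=
    fun i => (adj_w0 _).mpr (Or.inr (Or.inr ⟨i, rfl⟩))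
  have adjl : ∀ (i : Fin n) (j : Fin (rv i)), (QGraph r m n rv).Adj (qt i) (ql i j) :=
    fun i j => (adj_qt i _).mpr (Or.inr ⟨j, rfl⟩)
  have tt : ∀ i i' : Fin n, i = i' := by
    intro i i'; subst hn1; exact Subsingleton.elim i i'
  intro u v
  rcases vert_cases u with rfl | ⟨i, rfl⟩ | ⟨i, b, rfl⟩ | ⟨i, rfl⟩ | ⟨i, j, rfl⟩ <;>
    rcases vert_cases v with rfl | ⟨i', rfl⟩ | ⟨i', b', rfl⟩ | ⟨i', rfl⟩ | ⟨i', j', rfl⟩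
  -- eliminate qs cases
  case _ => calc (QGraph r m n rv).dist qw0 qw0 = 0 := by simp
              _ ≤ 3 := by omega
  · exact le_trans (dist_le (Walk.cons (adjw i') Walk.nil)) (by simp)
  · exact absurd i'.2 (by omega)
  · exact le_trans (dist_le (Walk.cons (adjt i') Walk.nil)) (by simp)
  · exact le_trans (dist_le (Walk.cons (adjt i') (Walk.cons (adjl i' j') Walk.nil))) (by simp)
  · exact le_trans (dist_le (Walk.cons (adjw i).symm Walk.nil)) (by simp)
  · exact le_trans (dist_le (Walk.cons (adjw i).symm (Walk.cons (adjw i') Walk.nil))) (by simp)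
  · exact absurd i'.2 (by omega)
  · exact le_trans (dist_le (Walk.cons (adjw i).symm (Walk.cons (adjt i') Walk.nil))) (by simp)
  · exact le_trans (dist_le (Walk.cons (adjw i).symm (Walk.cons (adjt i')
      (Walk.cons (adjl i' j') Walk.nil)))) (by simp)
  · exact absurd i.2 (by omega)
  · exact absurd i.2 (by omega)
  · exact absurd i.2 (by omega)
  · exact absurd i.2 (by omega)
  · exact absurd i.2 (by omega)
  · exact le_trans (dist_le (Walk.cons (adjt i).symm Walk.nil)) (by simp)
  · exact le_trans (dist_le (Walk.cons (adjt i).symm (Walk.cons (adjw i') Walk.nil))) (by simp)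
  · exact absurd i'.2 (by omega)
  · rw [tt i i']
    calc (QGraph r m n rv).dist (qt i') (qt i') = 0 := by simp
      _ ≤ 3 := by omega
  · rw [tt i i']
    exact le_trans (dist_le (Walk.cons (adjl i' j') Walk.nil)) (by simp)
  · exact le_trans (dist_le (Walk.cons (adjl i j).symm (Walk.cons (adjt i).symm Walk.nil))) (by simp)
  · exact le_trans (dist_le (Walk.cons (adjl i j).symm (Walk.cons (adjt i).symm
      (Walk.cons (adjw i') Walk.nil)))) (by simp)
  · exact absurd i'.2 (by omega)
  · rw [tt i' i] at *
    exact le_trans (dist_le (Walk.cons (adjl i j).symm Walk.nil)) (by simp)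
  · obtain rfl := tt i i'
    exact le_trans (dist_le (Walk.cons (adjl i j).symm (Walk.cons (adjl i j') Walk.nil))) (by simp)


end QAux

/-- For a tree `Q = Q(r,m,n)` of diameter four with `n ≥ 1` and
`(r,m,n) ≠ (0,1,1)`, `χ'ₛ(Q) = n₁(Q) = r + m + Σ_{i=1}^{n} rᵢ`. -/
theorem vdecNum_QGraph_n_pos (r m n : ℕ) (rv : Fin n → ℕ) (hn : 1 ≤ n)
    (hrv : ∀ i, 2 ≤ rv i) (hdiam : (QGraph r m n rv).diam = 4)
    (hne : ¬(r = 0 ∧ m = 1 ∧ n = 1)) :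
    vdecNum (QGraph r m n rv) = numDeg (QGraph r m n rv) 1 ∧
    numDeg (QGraph r m n rv) 1 = r + m + ∑ i, rv i := by
  have hn' : 0 < n := hn
  have hB : m = 0 → 2 ≤ n := by
    intro hm
    by_contra hcon
    have hn1 : n = 1 := by omega
    obtain ⟨u, v, hd⟩ := SimpleGraph.exists_dist_eq_diam (G := QGraph r m n rv)
    have hle := QAux.dist_le_three hm hn1 u v
    rw [hd, hdiam] at hle
    omega
  have h3 : 0 < m → 3 ≤ r + m + n := by
    intro hm
    by_contra hcon
    exact hne (by omega)
  have h2 : 2 ≤ m + n := by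
    rcases Nat.eq_zero_or_pos m with hm | hm
    · have := hB hm; omega
    · omega
  refine ⟨?_, QAux.numDeg_one h2 hn' hrv⟩
  rw [QAux.numDeg_one h2 hn' hrv]
  have hmem : (r + m + ∑ i, rv i) ∈
      {k : ℕ | ∃ c : Sym2 (QVert r m n rv) → Fin k, IsVDEC (QGraph r m n rv) k c} :=
    ⟨QAux.cFin hn' hrv, QAux.isVDEC_cFin hn' hrv hB h3⟩
  apply le_antisymm
  · exact Nat.sInf_le hmem
  · apply le_csInf ⟨_, hmem⟩
    rintro k ⟨c, hc⟩
    exact QAux.lower_bound c hc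
end

section
/- Let T be a spanning tree of a connected graph G, let E' = E(G) \ E(T), and let G[E'] be the subgraph of G induced by the edge set E'. Then χ'_s(G) ≤ χ'_s(T) + χ'(G[E']), where χ' denotes the chromatic index (minimum number of colors in a proper edge coloring). -/
open SimpleGraph

variable {V : Type*}

/-- A proper edge `k`-coloring: edges sharing an endpoint receive different colors. -/
def IsProperEdgeColoring (G : SimpleGraph V) (k : ℕ) (c : Sym2 V → Fin k) : Prop :=
  ∀ ⦃u v w : V⦄, G.Adj u v → G.Adj u w → v ≠ w → c s(u, v) ≠ c s(u, w)

/-- The chromatic index `χ'(G)`: the minimum number of colors in a proper edge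
coloring of `G`. -/
noncomputable def chromIndex (G : SimpleGraph V) : ℕ :=
  sInf {k : ℕ | ∃ c : Sym2 V → Fin k, IsProperEdgeColoring G k c}

lemma castAdd_ne_natAdd' {m n : ℕ} (i : Fin m) (j : Fin n) :
    Fin.castAdd n i ≠ Fin.natAdd m j := by
  intro h
  have h' := congrArg Fin.val h
  simp only [Fin.coe_castAdd, Fin.coe_natAdd] at h'
  have := i.isLt
  omega

lemma natAdd_inj' {m n : ℕ} {i j : Fin n} (h : Fin.natAdd m i = Fin.natAdd m j) : i = j := by
  have h' := congrArg Fin.val h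
  simp only [Fin.coe_natAdd] at h'
  exact Fin.ext (by omega)

lemma exists_neighbor' {G : SimpleGraph V} (h : G.Preconnected) {u v : V} (huv : u ≠ v) :
    ∃ w, G.Adj u w := by
  obtain ⟨p⟩ := h u v
  cases p with
  | nil => exact absurd rfl huv
  | cons h _ => exact ⟨_, h⟩

lemma walk_closed' {G : SimpleGraph V} {s : Set V}
    (hs : ∀ x ∈ s, ∀ y, G.Adj x y → y ∈ s) :
    ∀ {x y : V}, G.Walk x y → x ∈ s → y ∈ s := by
  intro x y p
  induction p with
  | nil => exact id
  | cons h _ ih => exact fun hx => ih (hs _ hx _ h)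

/-- An injective edge coloring is a vdec of any tree on a vertex set of size `≠ 2`. -/
lemma exists_vdec_tree [Fintype V] {T : SimpleGraph V} (hT : T.IsTree)
    (hcard : Fintype.card V ≠ 2) : ∃ k, ∃ c : Sym2 V → Fin k, IsVDEC T k c := by
  classical
  refine ⟨Fintype.card (Sym2 V), fun e => Fintype.equivFin (Sym2 V) e, ?_, ?_⟩
  · intro u v w _ _ hvw h
    exact hvw (Sym2.congr_right.mp ((Fintype.equivFin (Sym2 V)).injective h))
  · intro u v huv heq
    have key : ∀ {a b : V}, a ≠ b →
        {i | ∃ w, T.Adj a w ∧ (Fintype.equivFin (Sym2 V)) s(a, w) = i} =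
        {i | ∃ w, T.Adj b w ∧ (Fintype.equivFin (Sym2 V)) s(b, w) = i} →
        ∀ w, T.Adj a w → w = b := by
      intro a b hab h w hw
      have hmem : (Fintype.equivFin (Sym2 V)) s(a, w) ∈
          {i | ∃ w, T.Adj b w ∧ (Fintype.equivFin (Sym2 V)) s(b, w) = i} := by
        rw [← h]; exact ⟨w, hw, rfl⟩
      obtain ⟨w', _, hcw⟩ := hmem
      have he : s(b, w') = s(a, w) := (Fintype.equivFin (Sym2 V)).injective hcw
      rw [Sym2.eq, Sym2.rel_iff'] at he
      rcases he with h1 | h1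
      · exact absurd (congrArg Prod.fst h1 : b = a) hab.symm
      · exact (congrArg Prod.fst h1 : b = w).symm
    have hNu : ∀ w, T.Adj u w → w = v := key huv heq
    have hNv : ∀ w, T.Adj v w → w = u := key huv.symm heq.symm
    have hclosed : ∀ x ∈ ({u, v} : Set V), ∀ y, T.Adj x y → y ∈ ({u, v} : Set V) := by
      rintro x (rfl | rfl) y hy
      · exact Or.inr (hNu y hy)
      · exact Or.inl (hNv y hy)
    have hall : ∀ x : V, x ∈ ({u, v} : Set V) := fun x =>
      walk_closed' hclosed (hT.isConnected.preconnected u x).some (Or.inl rfl)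
    refine hcard ?_
    rw [← Nat.card_eq_fintype_card, Nat.card_eq_two_iff]
    exact ⟨u, v, huv, Set.eq_of_subset_of_subset (fun x _ => Set.mem_univ x)
      (fun x _ => hall x)⟩

open Classical in
/-- The combined coloring of tree edges and non-tree edges. -/
noncomputable def combColor (T : SimpleGraph V) {k₁ k₂ : ℕ}
    (c₁ : Sym2 V → Fin k₁) (c₂ : Sym2 V → Fin k₂) : Sym2 V → Fin (k₁ + k₂) :=
  fun e => if e ∈ T.edgeSet then Fin.castAdd k₂ (c₁ e) else Fin.natAdd k₁ (c₂ e)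

/-- Combination: a vdec of a spanning subgraph `T` plus a proper edge coloring of the
rest yields a vdec of `G`. -/
lemma isVDEC_combine {G T : SimpleGraph V} (hle : T ≤ G) {k₁ k₂ : ℕ}
    {c₁ : Sym2 V → Fin k₁} {c₂ : Sym2 V → Fin k₂} (h₁ : IsVDEC T k₁ c₁)
    (h₂ : IsProperEdgeColoring (SimpleGraph.fromEdgeSet (G.edgeSet \ T.edgeSet)) k₂ c₂) :
    IsVDEC G (k₁ + k₂) (combColor T c₁ c₂) := by
  classical
  set H := SimpleGraph.fromEdgeSet (G.edgeSet \ T.edgeSet) with hH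
  have hHadj : ∀ {a b : V}, G.Adj a b → s(a, b) ∉ T.edgeSet → H.Adj a b := by
    intro a b hab hnot
    rw [hH, SimpleGraph.fromEdgeSet_adj]
    exact ⟨⟨hab, hnot⟩, hab.ne⟩
  have hcc : ∀ (e : Sym2 V), e ∈ T.edgeSet → combColor T c₁ c₂ e = Fin.castAdd k₂ (c₁ e) := by
    intro e he; simp [combColor, he]
  have hcc' : ∀ (e : Sym2 V), e ∉ T.edgeSet → combColor T c₁ c₂ e = Fin.natAdd k₁ (c₂ e) := by
    intro e he; simp [combColor, he]
  constructor
  · intro u v w huv huw hvw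
    by_cases h1 : s(u, v) ∈ T.edgeSet <;> by_cases h2 : s(u, w) ∈ T.edgeSet
    · rw [hcc _ h1, hcc _ h2]
      intro h
      exact h₁.1 h1 h2 hvw (Fin.castAdd_injective k₁ k₂ h)
    · rw [hcc _ h1, hcc' _ h2]
      exact castAdd_ne_natAdd' _ _
    · rw [hcc' _ h1, hcc _ h2]
      exact (castAdd_ne_natAdd' _ _).symm
    · rw [hcc' _ h1, hcc' _ h2]
      intro h
      exact h₂ (hHadj huv h1) (hHadj huw h2) hvw (natAdd_inj' h)
  · intro u v huv heq
    refine h₁.2 u v huv ?_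
    have key : ∀ a : V,
        {i : Fin k₁ | ∃ w, T.Adj a w ∧ c₁ s(a, w) = i} =
        Fin.castAdd k₂ ⁻¹' {i | ∃ w, G.Adj a w ∧ combColor T c₁ c₂ s(a, w) = i} := by
      intro a
      ext i
      simp only [Set.mem_setOf_eq, Set.mem_preimage]
      constructor
      · rintro ⟨w, hw, rfl⟩
        exact ⟨w, hle hw, hcc _ hw⟩
      · rintro ⟨w, hw, hcw⟩
        by_cases hmem : s(a, w) ∈ T.edgeSet
        · rw [hcc _ hmem] at hcw
          exact ⟨w, hmem, Fin.castAdd_injective k₁ k₂ hcw⟩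
        · rw [hcc' _ hmem] at hcw
          exact absurd hcw.symm (castAdd_ne_natAdd' _ _)
    rw [key u, key v, heq]

/-- If `T` is a spanning tree of a connected graph `G` and
`E' = E(G) \ E(T)`, then `χ'ₛ(G) ≤ χ'ₛ(T) + χ'(G[E'])`. -/
theorem vdecNum_le_spanningTree_add_chromIndex {V : Type*} [Fintype V]
    (G T : SimpleGraph V) (hconn : G.Connected) (hle : T ≤ G) (hT : T.IsTree) :
    vdecNum G ≤ vdecNum T + chromIndex (SimpleGraph.fromEdgeSet (G.edgeSet \ T.edgeSet)) := by
  classical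
  by_cases hcard : Fintype.card V = 2
  · -- `G` has exactly two vertices, so no vdec of `G` exists at all: `vdecNum G = 0`.
    have hc2 : Nat.card V = 2 := by rw [Nat.card_eq_fintype_card]; exact hcard
    obtain ⟨u, v, huv, huniv⟩ := Nat.card_eq_two_iff.mp hc2
    have hallmem : ∀ x : V, x = u ∨ x = v := fun x => by
      have : x ∈ ({u, v} : Set V) := huniv ▸ Set.mem_univ x
      simpa using this
    have hadj : G.Adj u v := by
      obtain ⟨w, hw⟩ := exists_neighbor' hconn.preconnected huv
      rcases hallmem w with rfl | rfl
      · exact absurd rfl hw.ne'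
      · exact hw
    have hempty : {k : ℕ | ∃ c : Sym2 V → Fin k, IsVDEC G k c} = ∅ := by
      ext k
      simp only [Set.mem_setOf_eq, Set.mem_empty_iff_false, iff_false]
      rintro ⟨c, hc⟩
      refine hc.2 u v huv ?_
      have e1 : {i | ∃ w, G.Adj u w ∧ c s(u, w) = i} = {c s(u, v)} := by
        ext i
        simp only [Set.mem_setOf_eq, Set.mem_singleton_iff]
        constructor
        · rintro ⟨w, hw, rfl⟩
          rcases hallmem w with rfl | rfl
          · exact absurd rfl hw.ne'
          · rfl
        · rintro rfl
          exact ⟨v, hadj, rfl⟩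
      have e2 : {i | ∃ w, G.Adj v w ∧ c s(v, w) = i} = {c s(v, u)} := by
        ext i
        simp only [Set.mem_setOf_eq, Set.mem_singleton_iff]
        constructor
        · rintro ⟨w, hw, rfl⟩
          rcases hallmem w with rfl | rfl
          · rfl
          · exact absurd rfl hw.ne'
        · rintro rfl
          exact ⟨u, hadj.symm, rfl⟩
      rw [e1, e2, Sym2.eq_swap]
    rw [vdecNum, hempty, Nat.sInf_empty]
    exact Nat.zero_le _
  · have hTne : {k : ℕ | ∃ c : Sym2 V → Fin k, IsVDEC T k c}.Nonempty :=
      exists_vdec_tree hT hcard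
    have hCne : {k : ℕ | ∃ c : Sym2 V → Fin k,
        IsProperEdgeColoring (SimpleGraph.fromEdgeSet (G.edgeSet \ T.edgeSet)) k c}.Nonempty := by
      refine ⟨Fintype.card (Sym2 V), fun e => Fintype.equivFin (Sym2 V) e, ?_⟩
      intro u v w _ _ hvw h
      exact hvw (Sym2.congr_right.mp ((Fintype.equivFin (Sym2 V)).injective h))
    obtain ⟨c₁, hc₁⟩ := Nat.sInf_mem hTne
    obtain ⟨c₂, hc₂⟩ := Nat.sInf_mem hCne
    exact Nat.sInf_le ⟨_, isVDEC_combine hle hc₁ hc₂⟩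
end
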